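/- arXiv:1405.6300 — 3 statements merged into one kernel-verified Lean document; each statement's English description precedes it below -/
import Mathlib

section
/- Let ξ, φ : ℝ → ℝ be smooth with ξ′(x) ≠ 0 and φ(x) ≠ 0 for all x, and let Φ be the prolongation to J⁴ of the fiber-preserving transformation x̄ = ξ(x), ū = φ(x)u. Then on the set {u ≠ 0}, the pullback under Φ of the one-form (dū − p̄ dx̄)/ū (the form (du − p dx)/u written in the barred coordinates) equals (du − p dx)/u; i.e., the one-form ω² = (du − p dx)/u is invariant under all prolonged fiber-preserving transformations. -/
noncomputable section

/-- The fourth jet space `J⁴`, with coordinates `z = (x,u,p,q,r,s)` indexed `0,…,5`. -/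
abbrev J : Type := Fin 6 → ℝ

/-- A differential 1-form on (an open subset of) `J ≅ ℝ⁶`. -/
abbrev OneForm : Type := J → (J →L[ℝ] ℝ)

/-- The constant coordinate one-forms `dx, du, dp, dq, dr, ds` (`i = 0,…,5`). -/
def coord (i : Fin 6) : J →L[ℝ] ℝ := ContinuousLinearMap.proj i

/-- Exterior derivative of a 1-form, as a 2-form. -/
def extd (ω : OneForm) : J → J → J → ℝ :=
  fun z X Y => fderiv ℝ ω z X Y - fderiv ℝ ω z Y X

/-- Wedge product of two 1-forms, as a 2-form. -/
def wedge (α β : OneForm) : J → J → J → ℝ :=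
  fun z X Y => α z X * β z Y - α z Y * β z X

/-- Pullback of a 1-form under a map `Φ : J → J`. -/
def pullback (Φ : J → J) (ω : OneForm) : OneForm :=
  fun z => (ω (Φ z)).comp (fderiv ℝ Φ z)

/-- Truncated total derivative `D_x = ∂_x + p∂_u + q∂_p + r∂_q + s∂_r`. -/
def Dx (F : J → ℝ) : J → ℝ :=
  fun z => fderiv ℝ F z ![1, z 2, z 3, z 4, z 5, 0]

def pbar (ξ φ : ℝ → ℝ) : J → ℝ :=
  fun z => (deriv φ (z 0) * z 1 + φ (z 0) * z 2) / deriv ξ (z 0)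

def qbar (ξ φ : ℝ → ℝ) : J → ℝ := fun z => Dx (pbar ξ φ) z / deriv ξ (z 0)

def rbar (ξ φ : ℝ → ℝ) : J → ℝ := fun z => Dx (qbar ξ φ) z / deriv ξ (z 0)

def sbar (ξ φ : ℝ → ℝ) : J → ℝ := fun z => Dx (rbar ξ φ) z / deriv ξ (z 0)

/-- The prolongation to `J⁴` of the fiber-preserving transformation
`x̄ = ξ(x), ū = φ(x)u`. -/
def Prolong (ξ φ : ℝ → ℝ) : J → J :=
  fun z => ![ξ (z 0), φ (z 0) * z 1, pbar ξ φ z, qbar ξ φ z, rbar ξ φ z, sbar ξ φ z]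

/-- `ω¹ = dx`. -/
def ω1 : OneForm := fun _ => coord 0
/-- `ω² = (du − p dx)/u`. -/
def ω2 : OneForm := fun z => (z 1)⁻¹ • (coord 1 - z 2 • coord 0)
/-- `ω³ = dp − q dx`. -/
def ω3 : OneForm := fun z => coord 2 - z 3 • coord 0
/-- `ω⁴ = dq − r dx`. -/
def ω4 : OneForm := fun z => coord 3 - z 4 • coord 0
/-- `ω⁵ = dr − s dx`. -/
def ω5 : OneForm := fun z => coord 4 - z 5 • coord 0

/-- `I = f₄s + f₃r + f₂q + f₁p + f₀u` (direct equivalence invariant). -/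
def Idir (f : Fin 5 → ℝ → ℝ) : J → ℝ :=
  fun z => f 4 (z 0) * z 5 + f 3 (z 0) * z 4 + f 2 (z 0) * z 3 + f 1 (z 0) * z 2 + f 0 (z 0) * z 1

/-- `I = (f₄s + f₃r + f₂q + f₁p)/u + f₀` (gauge equivalence invariant). -/
def Igau (f : Fin 5 → ℝ → ℝ) : J → ℝ :=
  fun z => (f 4 (z 0) * z 5 + f 3 (z 0) * z 4 + f 2 (z 0) * z 3 + f 1 (z 0) * z 2) / z 1 + f 0 (z 0)


lemma coord_contDiff (i : Fin 6) : ContDiff ℝ (⊤ : ℕ∞) (fun z : J => z i) :=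
  (ContinuousLinearMap.proj i : J →L[ℝ] ℝ).contDiff

lemma Dx_contDiff {F : J → ℝ} (hF : ContDiff ℝ (⊤ : ℕ∞) F) :
    ContDiff ℝ (⊤ : ℕ∞) (Dx F) := by
  have hv : ContDiff ℝ (⊤ : ℕ∞) (fun z : J => (![1, z 2, z 3, z 4, z 5, 0] : J)) := by
    apply contDiff_pi.2
    intro i
    fin_cases i <;> simp <;>
      first
        | exact contDiff_const
        | exact coord_contDiff _
  have h1 : ((⊤ : ℕ∞) : WithTop ℕ∞) + 1 ≤ ((⊤ : ℕ∞) : WithTop ℕ∞) := by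
    norm_cast
  exact (hF.fderiv_right (m := ((⊤ : ℕ∞) : WithTop ℕ∞)) h1).clm_apply hv

lemma pbar_contDiff {ξ φ : ℝ → ℝ}
    (hξ : ContDiff ℝ (⊤ : ℕ∞) ξ) (hφ : ContDiff ℝ (⊤ : ℕ∞) φ)
    (hξ' : ∀ x, deriv ξ x ≠ 0) : ContDiff ℝ (⊤ : ℕ∞) (pbar ξ φ) := by
  have hφ' : ContDiff ℝ (⊤ : ℕ∞) (deriv φ) := (contDiff_infty_iff_deriv.1 hφ).2
  have hξ'' : ContDiff ℝ (⊤ : ℕ∞) (deriv ξ) := (contDiff_infty_iff_deriv.1 hξ).2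
  exact (((hφ'.comp (coord_contDiff 0)).mul (coord_contDiff 1)).add
      ((hφ.comp (coord_contDiff 0)).mul (coord_contDiff 2))).div
    (hξ''.comp (coord_contDiff 0)) (fun z => hξ' (z 0))

/-- the one-form `ω² = (du − p dx)/u` is invariant under every prolonged
fiber-preserving transformation `x̄ = ξ(x), ū = φ(x)u` on the set `{u ≠ 0}`. -/
theorem omega2_invariant (ξ φ : ℝ → ℝ)
    (hξ : ContDiff ℝ (⊤ : ℕ∞) ξ) (hφ : ContDiff ℝ (⊤ : ℕ∞) φ)
    (hξ' : ∀ x, deriv ξ x ≠ 0) (hφ0 : ∀ x, φ x ≠ 0) :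
    ∀ z : J, z 1 ≠ 0 → pullback (Prolong ξ φ) ω2 z = ω2 z := by
  intro z hz
  have hξ'' : ContDiff ℝ (⊤ : ℕ∞) (deriv ξ) := (contDiff_infty_iff_deriv.1 hξ).2
  have h0 : ContDiff ℝ (⊤ : ℕ∞) (fun w : J => ξ (w 0)) := hξ.comp (coord_contDiff 0)
  have h1 : ContDiff ℝ (⊤ : ℕ∞) (fun w : J => φ (w 0) * w 1) :=
    (hφ.comp (coord_contDiff 0)).mul (coord_contDiff 1)
  have h2 : ContDiff ℝ (⊤ : ℕ∞) (pbar ξ φ) := pbar_contDiff hξ hφ hξ'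
  have h3 : ContDiff ℝ (⊤ : ℕ∞) (qbar ξ φ) :=
    (Dx_contDiff h2).div (hξ''.comp (coord_contDiff 0)) (fun w => hξ' (w 0))
  have h4 : ContDiff ℝ (⊤ : ℕ∞) (rbar ξ φ) :=
    (Dx_contDiff h3).div (hξ''.comp (coord_contDiff 0)) (fun w => hξ' (w 0))
  have h5 : ContDiff ℝ (⊤ : ℕ∞) (sbar ξ φ) :=
    (Dx_contDiff h4).div (hξ''.comp (coord_contDiff 0)) (fun w => hξ' (w 0))
  have hdiff : ∀ i : Fin 6, DifferentiableAt ℝ (fun w : J => Prolong ξ φ w i) z := by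
    intro i
    fin_cases i <;> simp only [Prolong, Matrix.cons_val_zero, Matrix.cons_val_one,
      Matrix.head_cons, Matrix.cons_val_two, Matrix.tail_cons, Matrix.cons_val_three,
      Matrix.cons_val_four, Matrix.cons_val_fin_one, Fin.isValue]
    · exact (h0.differentiable (by simp)).differentiableAt
    · exact (h1.differentiable (by simp)).differentiableAt
    · exact (h2.differentiable (by simp)).differentiableAt
    · exact (h3.differentiable (by simp)).differentiableAt
    · exact (h4.differentiable (by simp)).differentiableAt
    · exact (h5.differentiable (by simp)).differentiableAt
  have hfd := fderiv_pi (𝕜 := ℝ) hdiff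
  have hF0 : fderiv ℝ (fun w : J => ξ (w 0)) z = deriv ξ (z 0) • coord 0 := by
    exact (((hξ.differentiable (by simp) (z 0)).hasDerivAt).comp_hasFDerivAt z
      (ContinuousLinearMap.proj 0 : J →L[ℝ] ℝ).hasFDerivAt).fderiv
  have hF1 : fderiv ℝ (fun w : J => φ (w 0) * w 1) z
      = φ (z 0) • (coord 1 : J →L[ℝ] ℝ) + z 1 • (deriv φ (z 0) • coord 0) := by
    have hc : HasFDerivAt (fun w : J => φ (w 0)) (deriv φ (z 0) • (coord 0 : J →L[ℝ] ℝ)) z :=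
      ((hφ.differentiable (by simp) (z 0)).hasDerivAt).comp_hasFDerivAt z
        (ContinuousLinearMap.proj 0 : J →L[ℝ] ℝ).hasFDerivAt
    have hd : HasFDerivAt (fun w : J => w 1) (coord 1 : J →L[ℝ] ℝ) z :=
      (ContinuousLinearMap.proj 1 : J →L[ℝ] ℝ).hasFDerivAt
    exact (hc.mul hd).fderiv
  ext v
  simp only [pullback, ContinuousLinearMap.comp_apply, hfd, ContinuousLinearMap.pi_apply, ω2,
    Prolong, Matrix.cons_val_zero, Matrix.cons_val_one, Matrix.head_cons, Matrix.cons_val_two,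
    Matrix.tail_cons, hF0, hF1, ContinuousLinearMap.smul_apply, ContinuousLinearMap.sub_apply,
    ContinuousLinearMap.add_apply, smul_eq_mul, coord, ContinuousLinearMap.proj_apply, pbar]
  field_simp [hz, hφ0 (z 0), hξ' (z 0)]
  ring
end
end

section
/- (Proposition 1, direct equivalence.) Let D[u] = Σ_{i=0}^{4} fᵢ(x)Dⁱu and D̄[ū] = Σ_{i=0}^{4} f̄ᵢ(x̄)D̄ⁱū be fourth order differential operators with smooth coefficients, and suppose they are directly equivalent under the fiber-preserving transformation x̄ = ξ(x), ū = φ(x)u (ξ′ ≠ 0, φ ≠ 0): for every smooth u, writing ū(ξ(x)) = φ(x)u(x), one has D̄[ū](ξ(x)) = D[u](x) for all x. Let Φ be the prolongation of the transformation to J⁴, let ω¹,…,ω⁵ be the base coframe, ω⁶ = dI with I = f₄s + f₃r + f₂q + f₁p + f₀u, and let ω̄¹,…,ω̄⁶ be the corresponding forms built from f̄ᵢ in the barred coordinates. Then on {u ≠ 0}: Φ*ω̄¹ = a₁ω¹, Φ*ω̄² = ω², Φ*ω̄³ = a₂ω² + a₃ω³, Φ*ω̄⁴ = a₄ω² + a₅ω³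 + a₆ω⁴, Φ*ω̄⁵ = a₇ω² + a₈ω³ + a₉ω⁴ + a₁₀ω⁵, and Φ*ω̄⁶ = ω⁶, for smooth functions a₁,…,a₁₀ with a₁a₃a₆a₁₀ ≠ 0 everywhere (indeed a₁ = ξ′, a₃ = φ/ξ′, a₆ = φ/ξ′², a₁₀ = φ/ξ′³). -/
noncomputable section

@[simp] lemma vec6_two {α : Type*} (a b c d e f : α) : ![a,b,c,d,e,f] 2 = c := rfl
@[simp] lemma vec6_three {α : Type*} (a b c d e f : α) : ![a,b,c,d,e,f] 3 = d := rfl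
@[simp] lemma vec6_four {α : Type*} (a b c d e f : α) : ![a,b,c,d,e,f] 4 = e := rfl
@[simp] lemma vec6_five {α : Type*} (a b c d e f : α) : ![a,b,c,d,e,f] 5 = f := rfl
@[simp] lemma vec5_two {α : Type*} (a b c d e : α) : ![a,b,c,d,e] 2 = c := rfl
@[simp] lemma vec5_three {α : Type*} (a b c d e : α) : ![a,b,c,d,e] 3 = d := rfl
@[simp] lemma vec5_four {α : Type*} (a b c d e : α) : ![a,b,c,d,e] 4 = e := rfl

-- linear-in-fiber functions
def Lin (g : Fin 5 → ℝ → ℝ) : J → ℝ := fun z =>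
  g 0 (z 0) * z 1 + g 1 (z 0) * z 2 + g 2 (z 0) * z 3 + g 3 (z 0) * z 4 + g 4 (z 0) * z 5

def LinD (g : Fin 5 → ℝ → ℝ) (z : J) : J →L[ℝ] ℝ :=
  (deriv (g 0) (z 0) * z 1 + deriv (g 1) (z 0) * z 2 + deriv (g 2) (z 0) * z 3
    + deriv (g 3) (z 0) * z 4 + deriv (g 4) (z 0) * z 5) • coord 0
  + g 0 (z 0) • coord 1 + g 1 (z 0) • coord 2 + g 2 (z 0) • coord 3
  + g 3 (z 0) • coord 4 + g 4 (z 0) • coord 5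

lemma LinD_apply (g : Fin 5 → ℝ → ℝ) (z w : J) :
    LinD g z w = (deriv (g 0) (z 0) * z 1 + deriv (g 1) (z 0) * z 2 + deriv (g 2) (z 0) * z 3
      + deriv (g 3) (z 0) * z 4 + deriv (g 4) (z 0) * z 5) * w 0
      + g 0 (z 0) * w 1 + g 1 (z 0) * w 2 + g 2 (z 0) * w 3 + g 3 (z 0) * w 4
      + g 4 (z 0) * w 5 := by
  simp [LinD, coord]

lemma hasFDerivAt_coord (i : Fin 6) (z : J) : HasFDerivAt (fun z : J => z i) (coord i) z :=
  (coord i).hasFDerivAt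

lemma hasFDerivAt_term {g : ℝ → ℝ} (hg : Differentiable ℝ g) (i : Fin 6) (z : J) :
    HasFDerivAt (fun z : J => g (z 0) * z i)
      ((deriv g (z 0) * z i) • coord 0 + g (z 0) • coord i) z := by
  have h1 : HasFDerivAt (fun z : J => g (z 0)) (deriv g (z 0) • coord 0) z :=
    ((hg (z 0)).hasDerivAt).comp_hasFDerivAt z (hasFDerivAt_coord 0 z)
  have := h1.fun_mul (hasFDerivAt_coord i z)
  refine this.congr_fderiv ?_
  ext w
  simp [coord, smul_smul]
  ring

lemma hasFDerivAt_Lin {g : Fin 5 → ℝ → ℝ} (hg : ∀ j, Differentiable ℝ (g j)) (z : J) :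
    HasFDerivAt (Lin g) (LinD g z) z := by
  have h := ((((hasFDerivAt_term (hg 0) 1 z).fun_add (hasFDerivAt_term (hg 1) 2 z)).fun_add
    (hasFDerivAt_term (hg 2) 3 z)).fun_add (hasFDerivAt_term (hg 3) 4 z)).fun_add
    (hasFDerivAt_term (hg 4) 5 z)
  show HasFDerivAt (fun z : J => g 0 (z 0) * z 1 + g 1 (z 0) * z 2 + g 2 (z 0) * z 3
    + g 3 (z 0) * z 4 + g 4 (z 0) * z 5) (LinD g z) z
  refine h.congr_fderiv ?_
  ext w
  simp [LinD, coord]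
  ring

lemma differentiable_Lin {g : Fin 5 → ℝ → ℝ} (hg : ∀ j, Differentiable ℝ (g j)) :
    Differentiable ℝ (Lin g) := fun z => (hasFDerivAt_Lin hg z).differentiableAt

lemma fderiv_Lin {g : Fin 5 → ℝ → ℝ} (hg : ∀ j, Differentiable ℝ (g j)) (z : J) :
    fderiv ℝ (Lin g) z = LinD g z := (hasFDerivAt_Lin hg z).fderiv

lemma Dx_Lin {g : Fin 5 → ℝ → ℝ} (hg : ∀ j, Differentiable ℝ (g j)) (z : J) :
    Dx (Lin g) z = (deriv (g 0) (z 0) * z 1 + deriv (g 1) (z 0) * z 2 + deriv (g 2) (z 0) * z 3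
      + deriv (g 3) (z 0) * z 4 + deriv (g 4) (z 0) * z 5)
      + (g 0 (z 0) * z 2 + g 1 (z 0) * z 3 + g 2 (z 0) * z 4 + g 3 (z 0) * z 5) := by
  rw [Dx, fderiv_Lin hg, LinD_apply]
  norm_num
  ring

section Transf
variable (ξ φ : ℝ → ℝ)

def gP : Fin 5 → ℝ → ℝ :=
  ![fun x => deriv φ x / deriv ξ x, fun x => φ x / deriv ξ x, fun _ => 0, fun _ => 0, fun _ => 0]
def gQ : Fin 5 → ℝ → ℝ :=
  ![fun x => deriv (gP ξ φ 0) x / deriv ξ x,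
    fun x => (deriv (gP ξ φ 1) x + gP ξ φ 0 x) / deriv ξ x,
    fun x => gP ξ φ 1 x / deriv ξ x, fun _ => 0, fun _ => 0]
def gR : Fin 5 → ℝ → ℝ :=
  ![fun x => deriv (gQ ξ φ 0) x / deriv ξ x,
    fun x => (deriv (gQ ξ φ 1) x + gQ ξ φ 0 x) / deriv ξ x,
    fun x => (deriv (gQ ξ φ 2) x + gQ ξ φ 1 x) / deriv ξ x,
    fun x => gQ ξ φ 2 x / deriv ξ x, fun _ => 0]
def gS : Fin 5 → ℝ → ℝ :=
  ![fun x => deriv (gR ξ φ 0) x / deriv ξ x,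
    fun x => (deriv (gR ξ φ 1) x + gR ξ φ 0 x) / deriv ξ x,
    fun x => (deriv (gR ξ φ 2) x + gR ξ φ 1 x) / deriv ξ x,
    fun x => (deriv (gR ξ φ 3) x + gR ξ φ 2 x) / deriv ξ x,
    fun x => gR ξ φ 3 x / deriv ξ x]

variable (hξ : ContDiff ℝ (⊤ : ℕ∞) ξ) (hφ : ContDiff ℝ (⊤ : ℕ∞) φ)
  (hξ' : ∀ x, deriv ξ x ≠ 0) (hφ0 : ∀ x, φ x ≠ 0)

lemma smooth_deriv {f : ℝ → ℝ} (hf : ContDiff ℝ (⊤ : ℕ∞) f) : ContDiff ℝ (⊤ : ℕ∞) (deriv f) :=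
  (contDiff_infty_iff_deriv.mp hf).2

include hξ hφ hξ' in
lemma smooth_gP : ∀ j, ContDiff ℝ (⊤ : ℕ∞) (gP ξ φ j) := by
  intro j
  fin_cases j <;> simp [gP]
  · exact (smooth_deriv hφ).div (smooth_deriv hξ) hξ'
  · exact hφ.div (smooth_deriv hξ) hξ'
  all_goals exact contDiff_const

include hξ hφ hξ' in
lemma smooth_gQ : ∀ j, ContDiff ℝ (⊤ : ℕ∞) (gQ ξ φ j) := by
  have h := smooth_gP ξ φ hξ hφ hξ'
  intro j
  fin_cases j <;> simp [gQ]
  · exact (smooth_deriv (h 0)).div (smooth_deriv hξ) hξ'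
  · exact ((smooth_deriv (h 1)).add (h 0)).div (smooth_deriv hξ) hξ'
  · exact (h 1).div (smooth_deriv hξ) hξ'
  all_goals exact contDiff_const

include hξ hφ hξ' in
lemma smooth_gR : ∀ j, ContDiff ℝ (⊤ : ℕ∞) (gR ξ φ j) := by
  have h := smooth_gQ ξ φ hξ hφ hξ'
  intro j
  fin_cases j <;> simp [gR]
  · exact (smooth_deriv (h 0)).div (smooth_deriv hξ) hξ'
  · exact ((smooth_deriv (h 1)).add (h 0)).div (smooth_deriv hξ) hξ'
  · exact ((smooth_deriv (h 2)).add (h 1)).div (smooth_deriv hξ) hξ'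
  · exact (h 2).div (smooth_deriv hξ) hξ'
  all_goals exact contDiff_const

include hξ hφ hξ' in
lemma smooth_gS : ∀ j, ContDiff ℝ (⊤ : ℕ∞) (gS ξ φ j) := by
  have h := smooth_gR ξ φ hξ hφ hξ'
  intro j
  fin_cases j <;> simp [gS]
  · exact (smooth_deriv (h 0)).div (smooth_deriv hξ) hξ'
  · exact ((smooth_deriv (h 1)).add (h 0)).div (smooth_deriv hξ) hξ'
  · exact ((smooth_deriv (h 2)).add (h 1)).div (smooth_deriv hξ) hξ'
  · exact ((smooth_deriv (h 3)).add (h 2)).div (smooth_deriv hξ) hξ'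
  · exact (h 3).div (smooth_deriv hξ) hξ'

lemma diff_of_smooth {f : ℝ → ℝ} (hf : ContDiff ℝ (⊤ : ℕ∞) f) : Differentiable ℝ f :=
  (contDiff_infty_iff_deriv.mp hf).1

lemma gP2 : gP ξ φ 2 = fun _ => 0 := rfl
lemma gP3 : gP ξ φ 3 = fun _ => 0 := rfl
lemma gP4 : gP ξ φ 4 = fun _ => 0 := rfl
lemma gQ3 : gQ ξ φ 3 = fun _ => 0 := rfl
lemma gQ4 : gQ ξ φ 4 = fun _ => 0 := rfl
lemma gR4 : gR ξ φ 4 = fun _ => 0 := rfl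

lemma pbar_eq : pbar ξ φ = Lin (gP ξ φ) := by
  funext z
  simp [pbar, Lin, gP, Matrix.vecHead, Matrix.vecTail]
  ring

include hξ hφ hξ' in
lemma qbar_eq : qbar ξ φ = Lin (gQ ξ φ) := by
  have h := fun j => diff_of_smooth (smooth_gP ξ φ hξ hφ hξ' j)
  funext z
  show Dx (pbar ξ φ) z / deriv ξ (z 0) = _
  rw [pbar_eq, Dx_Lin h]
  simp [Lin, gQ, gP2, gP3, gP4, Matrix.vecHead, Matrix.vecTail, deriv_const']
  ring

include hξ hφ hξ' in
lemma rbar_eq : rbar ξ φ = Lin (gR ξ φ) := by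
  have h := fun j => diff_of_smooth (smooth_gQ ξ φ hξ hφ hξ' j)
  funext z
  show Dx (qbar ξ φ) z / deriv ξ (z 0) = _
  rw [qbar_eq ξ φ hξ hφ hξ', Dx_Lin h]
  simp [Lin, gR, gQ3, gQ4, Matrix.vecHead, Matrix.vecTail, deriv_const']
  ring

include hξ hφ hξ' in
lemma sbar_eq : sbar ξ φ = Lin (gS ξ φ) := by
  have h := fun j => diff_of_smooth (smooth_gR ξ φ hξ hφ hξ' j)
  funext z
  show Dx (rbar ξ φ) z / deriv ξ (z 0) = _
  rw [rbar_eq ξ φ hξ hφ hξ', Dx_Lin h]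
  simp [Lin, gS, gR4, Matrix.vecHead, Matrix.vecTail, deriv_const']
  ring

def DProl (ξ φ : ℝ → ℝ) (z : J) : J →L[ℝ] J :=
  ContinuousLinearMap.pi ![deriv ξ (z 0) • coord 0,
    (deriv φ (z 0) * z 1) • coord 0 + φ (z 0) • coord 1,
    LinD (gP ξ φ) z, LinD (gQ ξ φ) z, LinD (gR ξ φ) z, LinD (gS ξ φ) z]

include hξ hφ hξ' in
lemma hasFDerivAt_Prolong (z : J) : HasFDerivAt (Prolong ξ φ) (DProl ξ φ z) z := by
  have hgP := fun j => diff_of_smooth (smooth_gP ξ φ hξ hφ hξ' j)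
  have hgQ := fun j => diff_of_smooth (smooth_gQ ξ φ hξ hφ hξ' j)
  have hgR := fun j => diff_of_smooth (smooth_gR ξ φ hξ hφ hξ' j)
  have hgS := fun j => diff_of_smooth (smooth_gS ξ φ hξ hφ hξ' j)
  rw [DProl]
  apply hasFDerivAt_pi'.mpr
  intro i
  rw [ContinuousLinearMap.proj_pi]
  fin_cases i
  · show HasFDerivAt (fun z : J => Prolong ξ φ z 0) _ z
    simp only [Prolong, Matrix.cons_val_zero]
    exact ((diff_of_smooth hξ (z 0)).hasDerivAt).comp_hasFDerivAt z (hasFDerivAt_coord 0 z)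
  · show HasFDerivAt (fun z : J => Prolong ξ φ z 1) _ z
    simp only [Prolong, Matrix.cons_val_one, Matrix.head_cons]
    exact hasFDerivAt_term (diff_of_smooth hφ) 1 z
  · show HasFDerivAt (fun z : J => Prolong ξ φ z 2) _ z
    simp only [Prolong, vec6_two]
    rw [pbar_eq]
    exact hasFDerivAt_Lin hgP z
  · show HasFDerivAt (fun z : J => Prolong ξ φ z 3) _ z
    simp only [Prolong, vec6_three]
    rw [qbar_eq ξ φ hξ hφ hξ']
    exact hasFDerivAt_Lin hgQ z
  · show HasFDerivAt (fun z : J => Prolong ξ φ z 4) _ z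
    simp only [Prolong, vec6_four]
    rw [rbar_eq ξ φ hξ hφ hξ']
    exact hasFDerivAt_Lin hgR z
  · show HasFDerivAt (fun z : J => Prolong ξ φ z 5) _ z
    simp only [Prolong, vec6_five]
    rw [sbar_eq ξ φ hξ hφ hξ']
    exact hasFDerivAt_Lin hgS z

include hξ hφ hξ' in
lemma fderiv_Prolong (z : J) : fderiv ℝ (Prolong ξ φ) z = DProl ξ φ z :=
  (hasFDerivAt_Prolong ξ φ hξ hφ hξ' z).fderiv

lemma DProl_apply (z w : J) (i : Fin 6) :
    DProl ξ φ z w i = ![deriv ξ (z 0) * w 0,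
      deriv φ (z 0) * z 1 * w 0 + φ (z 0) * w 1,
      LinD (gP ξ φ) z w, LinD (gQ ξ φ) z w, LinD (gR ξ φ) z w, LinD (gS ξ φ) z w] i := by
  rw [DProl, ContinuousLinearMap.pi_apply]
  fin_cases i <;> simp [coord]

include hξ hφ hξ' in
lemma pb1 (z : J) : pullback (Prolong ξ φ) ω1 z = (deriv ξ (z 0)) • ω1 z := by
  rw [pullback, fderiv_Prolong ξ φ hξ hφ hξ']
  ext w
  simp [ω1, coord, DProl_apply]

include hξ hφ hξ' hφ0 in
lemma pb2 (z : J) (hz : z 1 ≠ 0) : pullback (Prolong ξ φ) ω2 z = ω2 z := by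
  rw [pullback, fderiv_Prolong ξ φ hξ hφ hξ']
  ext w
  simp only [ContinuousLinearMap.comp_apply, ω2, Prolong, vec6_two, Matrix.cons_val_one,
    Matrix.head_cons, Matrix.cons_val_zero, ContinuousLinearMap.smul_apply,
    ContinuousLinearMap.sub_apply, coord, ContinuousLinearMap.proj_apply, smul_eq_mul]
  rw [show (DProl ξ φ z) w 1 = deriv φ (z 0) * z 1 * w 0 + φ (z 0) * w 1 from DProl_apply ξ φ z w 1,
    show (DProl ξ φ z) w 0 = deriv ξ (z 0) * w 0 from DProl_apply ξ φ z w 0, pbar]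
  field_simp [hξ' (z 0), hz, hφ0 (z 0)]
  ring

include hξ hφ hξ' in
lemma pb3 (z : J) (hz : z 1 ≠ 0) : pullback (Prolong ξ φ) ω3 z
    = (gP ξ φ 0 (z 0) * z 1) • ω2 z + (gP ξ φ 1 (z 0)) • ω3 z := by
  rw [pullback, fderiv_Prolong ξ φ hξ hφ hξ']
  ext w
  simp only [ContinuousLinearMap.comp_apply, ω3, ω2, Prolong, vec6_three,
    Matrix.cons_val_one, Matrix.head_cons, Matrix.cons_val_zero,
    ContinuousLinearMap.smul_apply, ContinuousLinearMap.sub_apply,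
    ContinuousLinearMap.add_apply, coord, ContinuousLinearMap.proj_apply, smul_eq_mul]
  rw [show (DProl ξ φ z) w 2 = LinD (gP ξ φ) z w from DProl_apply ξ φ z w 2,
    show (DProl ξ φ z) w 0 = deriv ξ (z 0) * w 0 from DProl_apply ξ φ z w 0,
    qbar_eq ξ φ hξ hφ hξ', LinD_apply]
  simp only [Lin, gQ, gP2, gP3, gP4, Matrix.cons_val_zero, Matrix.cons_val_one,
    Matrix.head_cons, vec5_two, vec5_three, vec5_four, deriv_const']
  field_simp [hξ' (z 0), hz]
  ring

include hξ hφ hξ' in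
lemma pb4 (z : J) (hz : z 1 ≠ 0) : pullback (Prolong ξ φ) ω4 z
    = (gQ ξ φ 0 (z 0) * z 1) • ω2 z + (gQ ξ φ 1 (z 0)) • ω3 z + (gQ ξ φ 2 (z 0)) • ω4 z := by
  rw [pullback, fderiv_Prolong ξ φ hξ hφ hξ']
  ext w
  simp only [ContinuousLinearMap.comp_apply, ω4, ω3, ω2, Prolong, vec6_four,
    Matrix.cons_val_one, Matrix.head_cons, Matrix.cons_val_zero,
    ContinuousLinearMap.smul_apply, ContinuousLinearMap.sub_apply,
    ContinuousLinearMap.add_apply, coord, ContinuousLinearMap.proj_apply, smul_eq_mul]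
  rw [show (DProl ξ φ z) w 3 = LinD (gQ ξ φ) z w from DProl_apply ξ φ z w 3,
    show (DProl ξ φ z) w 0 = deriv ξ (z 0) * w 0 from DProl_apply ξ φ z w 0,
    rbar_eq ξ φ hξ hφ hξ', LinD_apply]
  simp only [Lin, gR, gQ3, gQ4, Matrix.cons_val_zero, Matrix.cons_val_one,
    Matrix.head_cons, vec5_two, vec5_three, vec5_four, deriv_const']
  field_simp [hξ' (z 0), hz]
  ring

include hξ hφ hξ' in
lemma pb5 (z : J) (hz : z 1 ≠ 0) : pullback (Prolong ξ φ) ω5 z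
    = (gR ξ φ 0 (z 0) * z 1) • ω2 z + (gR ξ φ 1 (z 0)) • ω3 z + (gR ξ φ 2 (z 0)) • ω4 z
      + (gR ξ φ 3 (z 0)) • ω5 z := by
  rw [pullback, fderiv_Prolong ξ φ hξ hφ hξ']
  ext w
  simp only [ContinuousLinearMap.comp_apply, ω5, ω4, ω3, ω2, Prolong, vec6_five,
    Matrix.cons_val_one, Matrix.head_cons, Matrix.cons_val_zero,
    ContinuousLinearMap.smul_apply, ContinuousLinearMap.sub_apply,
    ContinuousLinearMap.add_apply, coord, ContinuousLinearMap.proj_apply, smul_eq_mul]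
  rw [show (DProl ξ φ z) w 4 = LinD (gR ξ φ) z w from DProl_apply ξ φ z w 4,
    show (DProl ξ φ z) w 0 = deriv ξ (z 0) * w 0 from DProl_apply ξ φ z w 0,
    sbar_eq ξ φ hξ hφ hξ', LinD_apply]
  simp only [Lin, gS, gR4, Matrix.cons_val_zero, Matrix.cons_val_one,
    Matrix.head_cons, vec5_two, vec5_three, vec5_four, deriv_const']
  field_simp [hξ' (z 0), hz]
  ring

-- jets
def jet (u : ℝ → ℝ) (x : ℝ) : J :=
  ![x, u x, deriv u x, iteratedDeriv 2 u x, iteratedDeriv 3 u x, iteratedDeriv 4 u x]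

lemma smooth_itd {u : ℝ → ℝ} (hu : ContDiff ℝ (⊤ : ℕ∞) u) (n : ℕ) :
    ContDiff ℝ (⊤ : ℕ∞) (iteratedDeriv n u) := by
  induction n with
  | zero => simpa [iteratedDeriv_zero] using hu
  | succ n ih => rw [iteratedDeriv_succ]; exact smooth_deriv ih

lemma hasDerivAt_itd {u : ℝ → ℝ} (hu : ContDiff ℝ (⊤ : ℕ∞) u) (n : ℕ) (x : ℝ) :
    HasDerivAt (iteratedDeriv n u) (iteratedDeriv (n + 1) u x) x := by
  have h := ((diff_of_smooth (smooth_itd hu n)) x).hasDerivAt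
  rwa [← iteratedDeriv_succ] at h

lemma LinJet (g : Fin 5 → ℝ → ℝ) (u : ℝ → ℝ) (x : ℝ) :
    Lin g (jet u x) = g 0 x * iteratedDeriv 0 u x + g 1 x * iteratedDeriv 1 u x
      + g 2 x * iteratedDeriv 2 u x + g 3 x * iteratedDeriv 3 u x
      + g 4 x * iteratedDeriv 4 u x := by
  simp [Lin, jet, iteratedDeriv_zero, iteratedDeriv_one]

lemma deriv_LinJet {g : Fin 5 → ℝ → ℝ} {u : ℝ → ℝ}
    (hg : ∀ j, ContDiff ℝ (⊤ : ℕ∞) (g j)) (hg4 : g 4 = fun _ => 0)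
    (hu : ContDiff ℝ (⊤ : ℕ∞) u) (x : ℝ) :
    deriv (fun x => Lin g (jet u x)) x
      = deriv (g 0) x * iteratedDeriv 0 u x + deriv (g 1) x * iteratedDeriv 1 u x
        + deriv (g 2) x * iteratedDeriv 2 u x + deriv (g 3) x * iteratedDeriv 3 u x
        + (g 0 x * iteratedDeriv 1 u x + g 1 x * iteratedDeriv 2 u x
          + g 2 x * iteratedDeriv 3 u x + g 3 x * iteratedDeriv 4 u x) := by
  have hfun : (fun x => Lin g (jet u x))
      = fun x => g 0 x * iteratedDeriv 0 u x + g 1 x * iteratedDeriv 1 u x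
        + g 2 x * iteratedDeriv 2 u x + g 3 x * iteratedDeriv 3 u x
        + g 4 x * iteratedDeriv 4 u x := funext fun x => LinJet g u x
  have hterm : ∀ j : Fin 5, ∀ n : ℕ, HasDerivAt (fun x => g j x * iteratedDeriv n u x)
      (deriv (g j) x * iteratedDeriv n u x + g j x * iteratedDeriv (n + 1) u x) x :=
    fun j n => (((diff_of_smooth (hg j)) x).hasDerivAt).mul (hasDerivAt_itd hu n x)
  have H := ((((hterm 0 0).fun_add (hterm 1 1)).fun_add (hterm 2 2)).fun_add (hterm 3 3)).fun_add (hterm 4 4)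
  rw [hfun, H.deriv, hg4]
  simp [deriv_const']
  ring
section JetProl
variable {u v : ℝ → ℝ} (hu : ContDiff ℝ (⊤ : ℕ∞) u) (hvs : ContDiff ℝ (⊤ : ℕ∞) v)
  (hcomp : ∀ x, v (ξ x) = φ x * u x)

include hξ hξ' hφ hu hvs hcomp in
lemma jetP (x : ℝ) : Lin (gP ξ φ) (jet u x) = iteratedDeriv 1 v (ξ x) := by
  have h1 : deriv (fun y => v (ξ y)) x = deriv v (ξ x) * deriv ξ x := by
    rw [show (fun y => v (ξ y)) = v ∘ ξ from rfl]
    exact deriv_comp x (diff_of_smooth hvs _) (diff_of_smooth hξ _)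
  have h2 : (fun y => v (ξ y)) = fun y => φ y * u y := funext hcomp
  have h3 : deriv (fun y => φ y * u y) x = deriv φ x * u x + φ x * deriv u x :=
    (((diff_of_smooth hφ) x).hasDerivAt.mul ((diff_of_smooth hu) x).hasDerivAt).deriv
  have key : deriv v (ξ x) * deriv ξ x = deriv φ x * u x + φ x * deriv u x := by
    rw [← h1, h2, h3]
  rw [LinJet, iteratedDeriv_one]
  simp only [gP, Matrix.cons_val_zero, Matrix.cons_val_one, Matrix.head_cons,
    vec5_two, vec5_three, vec5_four, iteratedDeriv_zero, iteratedDeriv_one]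
  field_simp [hξ' x]
  first | linear_combination key | linear_combination -key

include hξ hξ' hφ hu hvs hcomp in
lemma jetQ (x : ℝ) : Lin (gQ ξ φ) (jet u x) = iteratedDeriv 2 v (ξ x) := by
  have hPfun : (fun y => Lin (gP ξ φ) (jet u y)) = fun y => iteratedDeriv 1 v (ξ y) :=
    funext (jetP ξ φ hξ hφ hξ' hu hvs hcomp)
  have h1 : deriv (fun y => iteratedDeriv 1 v (ξ y)) x = iteratedDeriv 2 v (ξ x) * deriv ξ x := by
    rw [show (fun y => iteratedDeriv 1 v (ξ y)) = iteratedDeriv 1 v ∘ ξ from rfl,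
      deriv_comp x (diff_of_smooth (smooth_itd hvs 1) _) (diff_of_smooth hξ _),
      ← iteratedDeriv_succ]
  have h2 := deriv_LinJet (smooth_gP ξ φ hξ hφ hξ') (gP4 ξ φ) hu x
  have key : iteratedDeriv 2 v (ξ x) * deriv ξ x
      = deriv (gP ξ φ 0) x * iteratedDeriv 0 u x + deriv (gP ξ φ 1) x * iteratedDeriv 1 u x
        + (gP ξ φ 0 x * iteratedDeriv 1 u x + gP ξ φ 1 x * iteratedDeriv 2 u x) := by
    rw [← h1, ← hPfun, h2]
    simp only [gP2, gP3, deriv_const', show gP ξ φ 2 x = 0 from rfl,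
      show gP ξ φ 3 x = 0 from rfl, zero_mul, mul_zero, add_zero]
    try ring
  rw [LinJet]
  simp only [gQ, gQ3, gQ4, Matrix.cons_val_zero, Matrix.cons_val_one, Matrix.head_cons,
    vec5_two, vec5_three, vec5_four]
  simp only [iteratedDeriv_zero, iteratedDeriv_one] at key ⊢
  field_simp [hξ' x]
  first | linear_combination key | linear_combination -key

include hξ hξ' hφ hu hvs hcomp in
lemma jetR (x : ℝ) : Lin (gR ξ φ) (jet u x) = iteratedDeriv 3 v (ξ x) := by
  have hQfun : (fun y => Lin (gQ ξ φ) (jet u y)) = fun y => iteratedDeriv 2 v (ξ y) :=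
    funext (jetQ ξ φ hξ hφ hξ' hu hvs hcomp)
  have h1 : deriv (fun y => iteratedDeriv 2 v (ξ y)) x = iteratedDeriv 3 v (ξ x) * deriv ξ x := by
    rw [show (fun y => iteratedDeriv 2 v (ξ y)) = iteratedDeriv 2 v ∘ ξ from rfl,
      deriv_comp x (diff_of_smooth (smooth_itd hvs 2) _) (diff_of_smooth hξ _),
      ← iteratedDeriv_succ]
  have h2 := deriv_LinJet (smooth_gQ ξ φ hξ hφ hξ') (gQ4 ξ φ) hu x
  have key : iteratedDeriv 3 v (ξ x) * deriv ξ x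
      = deriv (gQ ξ φ 0) x * iteratedDeriv 0 u x + deriv (gQ ξ φ 1) x * iteratedDeriv 1 u x
        + deriv (gQ ξ φ 2) x * iteratedDeriv 2 u x
        + (gQ ξ φ 0 x * iteratedDeriv 1 u x + gQ ξ φ 1 x * iteratedDeriv 2 u x
          + gQ ξ φ 2 x * iteratedDeriv 3 u x) := by
    rw [← h1, ← hQfun, h2]
    simp only [gQ3, deriv_const', show gQ ξ φ 3 x = 0 from rfl, zero_mul, mul_zero, add_zero]
    try ring
  rw [LinJet]
  simp only [gR, gR4, Matrix.cons_val_zero, Matrix.cons_val_one, Matrix.head_cons,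
    vec5_two, vec5_three, vec5_four]
  simp only [iteratedDeriv_zero, iteratedDeriv_one] at key ⊢
  field_simp [hξ' x]
  first | linear_combination key | linear_combination -key

include hξ hξ' hφ hu hvs hcomp in
lemma jetS (x : ℝ) : Lin (gS ξ φ) (jet u x) = iteratedDeriv 4 v (ξ x) := by
  have hRfun : (fun y => Lin (gR ξ φ) (jet u y)) = fun y => iteratedDeriv 3 v (ξ y) :=
    funext (jetR ξ φ hξ hφ hξ' hu hvs hcomp)
  have h1 : deriv (fun y => iteratedDeriv 3 v (ξ y)) x = iteratedDeriv 4 v (ξ x) * deriv ξ x := by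
    rw [show (fun y => iteratedDeriv 3 v (ξ y)) = iteratedDeriv 3 v ∘ ξ from rfl,
      deriv_comp x (diff_of_smooth (smooth_itd hvs 3) _) (diff_of_smooth hξ _),
      ← iteratedDeriv_succ]
  have h2 := deriv_LinJet (smooth_gR ξ φ hξ hφ hξ') (gR4 ξ φ) hu x
  have key : iteratedDeriv 4 v (ξ x) * deriv ξ x
      = deriv (gR ξ φ 0) x * iteratedDeriv 0 u x + deriv (gR ξ φ 1) x * iteratedDeriv 1 u x
        + deriv (gR ξ φ 2) x * iteratedDeriv 2 u x + deriv (gR ξ φ 3) x * iteratedDeriv 3 u x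
        + (gR ξ φ 0 x * iteratedDeriv 1 u x + gR ξ φ 1 x * iteratedDeriv 2 u x
          + gR ξ φ 2 x * iteratedDeriv 3 u x + gR ξ φ 3 x * iteratedDeriv 4 u x) := by
    rw [← h1, ← hRfun, h2]
  rw [LinJet]
  simp only [gS, Matrix.cons_val_zero, Matrix.cons_val_one, Matrix.head_cons,
    vec5_two, vec5_three, vec5_four]
  simp only [iteratedDeriv_zero, iteratedDeriv_one] at key ⊢
  field_simp [hξ' x]
  first | linear_combination key | linear_combination -key

end JetProl

lemma itd_sum (e : Fin 5 → ℝ) : ∀ (n : ℕ) (b : Fin 5 → ℝ → ℝ), (∀ k, ContDiff ℝ (⊤ : ℕ∞) (b k)) →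
    iteratedDeriv n (fun x => ∑ k : Fin 5, e k * b k x)
      = fun x => ∑ k : Fin 5, e k * iteratedDeriv n (b k) x := by
  intro n
  induction n with
  | zero => intro b hb; funext x; simp [iteratedDeriv_zero]
  | succ n ih =>
    intro b hb
    rw [iteratedDeriv_succ']
    have hder : deriv (fun x => ∑ k : Fin 5, e k * b k x)
        = fun x => ∑ k : Fin 5, e k * deriv (b k) x := by
      funext x
      rw [deriv_fun_sum (fun k _ => ((diff_of_smooth (hb k)) x).const_mul (e k))]
      exact Finset.sum_congr rfl fun k _ =>
        (((diff_of_smooth (hb k)) x).hasDerivAt.const_mul (e k)).deriv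
    rw [hder, ih (fun k => deriv (b k)) (fun k => smooth_deriv (hb k))]
    funext x
    exact Finset.sum_congr rfl fun k _ => by rw [← iteratedDeriv_succ']

include hξ in
lemma itd_pow (x₀ : ℝ) : ∀ (k : ℕ) (h : ℝ → ℝ), ContDiff ℝ (⊤ : ℕ∞) h →
    (∀ j, j < k → iteratedDeriv j (fun x => (ξ x - ξ x₀) ^ k * h x) x₀ = 0) ∧
    iteratedDeriv k (fun x => (ξ x - ξ x₀) ^ k * h x) x₀
      = k.factorial * (deriv ξ x₀) ^ k * h x₀ := by
  intro k
  induction k with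
  | zero =>
    intro h hh
    refine ⟨fun j hj => absurd hj (Nat.not_lt_zero j), ?_⟩
    simp [iteratedDeriv_zero]
  | succ k ih =>
    intro h hh
    have hderiv : deriv (fun x => (ξ x - ξ x₀) ^ (k + 1) * h x)
        = fun x => (ξ x - ξ x₀) ^ k * (((k : ℝ) + 1) * deriv ξ x * h x
            + (ξ x - ξ x₀) * deriv h x) := by
      funext x
      have h1 : HasDerivAt (fun x => (ξ x - ξ x₀) ^ (k + 1))
          ((((k : ℝ) + 1)) * (ξ x - ξ x₀) ^ k * deriv ξ x) x := by
        have := (((diff_of_smooth hξ x).hasDerivAt).sub_const (ξ x₀)).fun_pow (k + 1)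
        simpa using this
      have h2 := h1.fun_mul ((diff_of_smooth hh x).hasDerivAt)
      rw [h2.deriv]
      ring
    set H : ℝ → ℝ := fun x => ((k : ℝ) + 1) * deriv ξ x * h x + (ξ x - ξ x₀) * deriv h x
      with hHdef
    have hH : ContDiff ℝ (⊤ : ℕ∞) H := by
      apply ContDiff.add
      · exact (contDiff_const.mul (smooth_deriv hξ)).mul hh
      · exact (hξ.sub contDiff_const).mul (smooth_deriv hh)
    constructor
    · intro j hj
      match j with
      | 0 => simp [iteratedDeriv_zero]
      | Nat.succ j =>
        rw [iteratedDeriv_succ', hderiv]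
        exact (ih H hH).1 j (by omega)
    · rw [iteratedDeriv_succ', hderiv, (ih H hH).2, hHdef]
      simp only [sub_self, zero_mul, add_zero, zero_pow, Nat.factorial_succ]
      push_cast
      ring

include hξ hφ hξ' hφ0 in
lemma jet_surj (z : J) : ∃ u vv : ℝ → ℝ, ContDiff ℝ (⊤ : ℕ∞) u ∧ ContDiff ℝ (⊤ : ℕ∞) vv ∧
    (∀ x, vv (ξ x) = φ x * u x) ∧ jet u (z 0) = z := by
  classical
  set x₀ := z 0 with hx₀
  have hinv : ContDiff ℝ (⊤ : ℕ∞) (fun x => (φ x)⁻¹) := hφ.inv hφ0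
  set b : Fin 5 → ℝ → ℝ := fun k => fun x => (ξ x - ξ x₀) ^ (k : ℕ) * (φ x)⁻¹ with hbdef
  have hb : ∀ k, ContDiff ℝ (⊤ : ℕ∞) (b k) := by
    intro k
    exact ((hξ.sub contDiff_const).pow _).mul hinv
  set M : Matrix (Fin 5) (Fin 5) ℝ :=
    Matrix.of (fun j k : Fin 5 => iteratedDeriv (j : ℕ) (b k) x₀) with hMdef
  have htri : ∀ i j : Fin 5, i < j → M i j = 0 := by
    intro i j hij
    exact (itd_pow ξ hξ x₀ (j : ℕ) (fun x => (φ x)⁻¹) hinv).1 (i : ℕ) (by exact_mod_cast hij)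
  have hdiag : ∀ j : Fin 5, M j j
      = (j : ℕ).factorial * (deriv ξ x₀) ^ (j : ℕ) * (φ x₀)⁻¹ :=
    fun j => (itd_pow ξ hξ x₀ (j : ℕ) (fun x => (φ x)⁻¹) hinv).2
  have hdet : IsUnit M.det := by
    rw [Matrix.det_of_lowerTriangular M (fun i j h => htri i j (by simpa using h))]
    rw [isUnit_iff_ne_zero]
    apply Finset.prod_ne_zero_iff.mpr
    intro j _
    rw [hdiag j]
    exact mul_ne_zero (mul_ne_zero (by positivity) (pow_ne_zero _ (hξ' x₀)))
      (inv_ne_zero (hφ0 x₀))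
  set w : Fin 5 → ℝ := fun j => z j.succ with hwdef
  set e : Fin 5 → ℝ := M⁻¹.mulVec w with hedef
  have hMe : M.mulVec e = w := by
    rw [hedef, Matrix.mulVec_mulVec, Matrix.mul_nonsing_inv _ hdet, Matrix.one_mulVec]
  refine ⟨fun x => ∑ k : Fin 5, e k * b k x, fun t => ∑ k : Fin 5, e k * (t - ξ x₀) ^ (k : ℕ),
    ContDiff.sum (fun k _ => contDiff_const.mul (hb k)),
    ContDiff.sum (fun k _ => contDiff_const.mul ((contDiff_id.sub contDiff_const).pow _)), ?_, ?_⟩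
  · intro x
    rw [Finset.mul_sum]
    refine Finset.sum_congr rfl fun k _ => ?_
    rw [hbdef]
    field_simp [hφ0 x]
  · have hitd : ∀ j : Fin 5, iteratedDeriv (j : ℕ) (fun x => ∑ k : Fin 5, e k * b k x) x₀
        = w j := by
      intro j
      have := itd_sum e (j : ℕ) b hb
      rw [this]
      have : ∑ k : Fin 5, e k * iteratedDeriv (j : ℕ) (b k) x₀ = M.mulVec e j := by
        simp [Matrix.mulVec, dotProduct, hMdef, mul_comm]
      simp only []
      rw [this, hMe]
    funext i
    fin_cases i
    · rfl
    · have := hitd 0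
      simpa [jet, iteratedDeriv_zero, hwdef] using this
    · have := hitd 1
      simpa [jet, iteratedDeriv_one, hwdef] using this
    · exact hitd 2
    · exact hitd 3
    · exact hitd 4

lemma Idir_eq_Lin (f : Fin 5 → ℝ → ℝ) : Idir f = Lin f := by
  funext z; simp [Idir, Lin]; ring

include hξ hφ hξ' hφ0 in
lemma Idir_comp (f fb : Fin 5 → ℝ → ℝ)
    (heq : ∀ u v : ℝ → ℝ, ContDiff ℝ (⊤ : ℕ∞) u → ContDiff ℝ (⊤ : ℕ∞) v →
      (∀ x, v (ξ x) = φ x * u x) →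
      ∀ x, ∑ i : Fin 5, fb i (ξ x) * iteratedDeriv i.1 v (ξ x)
         = ∑ i : Fin 5, f i x * iteratedDeriv i.1 u x) :
    ∀ z : J, Idir fb (Prolong ξ φ z) = Idir f z := by
  intro z
  obtain ⟨u, vv, hu, hvv, hcomp, hjet⟩ := jet_surj ξ φ hξ hφ hξ' hφ0 z
  rw [← hjet]
  have heq' := heq u vv hu hvv hcomp (z 0)
  simp only [Fin.sum_univ_five, Fin.val_zero, Fin.val_one, Fin.val_two,
    show ((3 : Fin 5) : ℕ) = 3 from rfl, show ((4 : Fin 5) : ℕ) = 4 from rfl,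
    iteratedDeriv_zero, iteratedDeriv_one] at heq'
  have h2 : pbar ξ φ (jet u (z 0)) = iteratedDeriv 1 vv (ξ (z 0)) := by
    rw [pbar_eq]; exact jetP ξ φ hξ hφ hξ' hu hvv hcomp (z 0)
  have h3 : qbar ξ φ (jet u (z 0)) = iteratedDeriv 2 vv (ξ (z 0)) := by
    rw [qbar_eq ξ φ hξ hφ hξ']; exact jetQ ξ φ hξ hφ hξ' hu hvv hcomp (z 0)
  have h4 : rbar ξ φ (jet u (z 0)) = iteratedDeriv 3 vv (ξ (z 0)) := by
    rw [rbar_eq ξ φ hξ hφ hξ']; exact jetR ξ φ hξ hφ hξ' hu hvv hcomp (z 0)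
  have h5 : sbar ξ φ (jet u (z 0)) = iteratedDeriv 4 vv (ξ (z 0)) := by
    rw [sbar_eq ξ φ hξ hφ hξ']; exact jetS ξ φ hξ hφ hξ' hu hvv hcomp (z 0)
  simp only [Idir, Prolong, Matrix.cons_val_zero, Matrix.cons_val_one, Matrix.head_cons,
    vec6_two, vec6_three, vec6_four, vec6_five, h2, h3, h4, h5]
  simp only [show jet u (z 0) 0 = z 0 from rfl, show jet u (z 0) 1 = u (z 0) from rfl,
    show jet u (z 0) 2 = deriv u (z 0) from rfl,
    show jet u (z 0) 3 = iteratedDeriv 2 u (z 0) from rfl,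
    show jet u (z 0) 4 = iteratedDeriv 3 u (z 0) from rfl,
    show jet u (z 0) 5 = iteratedDeriv 4 u (z 0) from rfl]
  rw [← hcomp (z 0)]
  simp only [iteratedDeriv_one]
  linarith [heq']

include hξ hφ hξ' hφ0 in
lemma pb6 (f fb : Fin 5 → ℝ → ℝ) (hfb : ∀ i, ContDiff ℝ (⊤ : ℕ∞) (fb i))
    (heq : ∀ u v : ℝ → ℝ, ContDiff ℝ (⊤ : ℕ∞) u → ContDiff ℝ (⊤ : ℕ∞) v →
      (∀ x, v (ξ x) = φ x * u x) →
      ∀ x, ∑ i : Fin 5, fb i (ξ x) * iteratedDeriv i.1 v (ξ x)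
         = ∑ i : Fin 5, f i x * iteratedDeriv i.1 u x) (z : J) :
    pullback (Prolong ξ φ) (fun w => fderiv ℝ (Idir fb) w) z = fderiv ℝ (Idir f) z := by
  have hIb : Differentiable ℝ (Idir fb) := by
    rw [Idir_eq_Lin]
    exact differentiable_Lin (fun j => diff_of_smooth (hfb j))
  have hΦ : DifferentiableAt ℝ (Prolong ξ φ) z :=
    (hasFDerivAt_Prolong ξ φ hξ hφ hξ' z).differentiableAt
  rw [pullback, ← fderiv_comp z (hIb _) hΦ,
    show Idir fb ∘ Prolong ξ φ = Idir f from funext (Idir_comp ξ φ hξ hφ hξ' hφ0 f fb heq)]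

end Transf

/-- Proposition 1, direct equivalence: if `D̄ = D ∘ (1/φ)` under
`x̄ = ξ(x), ū = φ(x)u`, then the prolongation `Φ` relates the two coframes by the
triangular structure group, and `Φ*ω̄⁶ = ω⁶`. -/
theorem direct_equivalence_coframes (ξ φ : ℝ → ℝ) (f fb : Fin 5 → ℝ → ℝ)
    (hξ : ContDiff ℝ (⊤ : ℕ∞) ξ) (hφ : ContDiff ℝ (⊤ : ℕ∞) φ)
    (hξ' : ∀ x, deriv ξ x ≠ 0) (hφ0 : ∀ x, φ x ≠ 0)
    (hf : ∀ i, ContDiff ℝ (⊤ : ℕ∞) (f i)) (hfb : ∀ i, ContDiff ℝ (⊤ : ℕ∞) (fb i))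
    -- direct equivalence: `D̄[ū](ξ(x)) = D[u](x)` whenever `ū(ξ(x)) = φ(x)u(x)`
    (heq : ∀ u v : ℝ → ℝ, ContDiff ℝ (⊤ : ℕ∞) u → ContDiff ℝ (⊤ : ℕ∞) v →
      (∀ x, v (ξ x) = φ x * u x) →
      ∀ x, ∑ i : Fin 5, fb i (ξ x) * iteratedDeriv i.1 v (ξ x)
         = ∑ i : Fin 5, f i x * iteratedDeriv i.1 u x) :
    ∃ a : Fin 10 → (J → ℝ),
      (∀ i, ContDiff ℝ (⊤ : ℕ∞) (a i)) ∧
      (∀ z : J, z 1 ≠ 0 →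
        pullback (Prolong ξ φ) ω1 z = a 0 z • ω1 z ∧
        pullback (Prolong ξ φ) ω2 z = ω2 z ∧
        pullback (Prolong ξ φ) ω3 z = a 1 z • ω2 z + a 2 z • ω3 z ∧
        pullback (Prolong ξ φ) ω4 z = a 3 z • ω2 z + a 4 z • ω3 z + a 5 z • ω4 z ∧
        pullback (Prolong ξ φ) ω5 z
          = a 6 z • ω2 z + a 7 z • ω3 z + a 8 z • ω4 z + a 9 z • ω5 z ∧
        pullback (Prolong ξ φ) (fun w => fderiv ℝ (Idir fb) w) z = fderiv ℝ (Idir f) z) ∧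
      (∀ z : J, a 0 z * a 2 z * a 5 z * a 9 z ≠ 0) ∧
      (∀ z : J, a 0 z = deriv ξ (z 0) ∧ a 2 z = φ (z 0) / deriv ξ (z 0) ∧
        a 5 z = φ (z 0) / (deriv ξ (z 0)) ^ 2 ∧ a 9 z = φ (z 0) / (deriv ξ (z 0)) ^ 3) := by
  have hproj : ∀ i : Fin 6, ContDiff ℝ (⊤ : ℕ∞) (fun z : J => z i) :=
    fun i => (coord i).contDiff
  have hgP := smooth_gP ξ φ hξ hφ hξ'
  have hgQ := smooth_gQ ξ φ hξ hφ hξ'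
  have hgR := smooth_gR ξ φ hξ hφ hξ'
  refine ⟨![fun z => deriv ξ (z 0),
    fun z => gP ξ φ 0 (z 0) * z 1, fun z => gP ξ φ 1 (z 0),
    fun z => gQ ξ φ 0 (z 0) * z 1, fun z => gQ ξ φ 1 (z 0), fun z => gQ ξ φ 2 (z 0),
    fun z => gR ξ φ 0 (z 0) * z 1, fun z => gR ξ φ 1 (z 0), fun z => gR ξ φ 2 (z 0),
    fun z => gR ξ φ 3 (z 0)], ?_, ?_, ?_, ?_⟩
  · intro i
    fin_cases i
    · exact (smooth_deriv hξ).comp (hproj 0)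
    · exact ((hgP 0).comp (hproj 0)).mul (hproj 1)
    · exact (hgP 1).comp (hproj 0)
    · exact ((hgQ 0).comp (hproj 0)).mul (hproj 1)
    · exact (hgQ 1).comp (hproj 0)
    · exact (hgQ 2).comp (hproj 0)
    · exact ((hgR 0).comp (hproj 0)).mul (hproj 1)
    · exact (hgR 1).comp (hproj 0)
    · exact (hgR 2).comp (hproj 0)
    · exact (hgR 3).comp (hproj 0)
  · intro z hz
    refine ⟨pb1 ξ φ hξ hφ hξ' z, pb2 ξ φ hξ hφ hξ' hφ0 z hz, pb3 ξ φ hξ hφ hξ' z hz,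
      pb4 ξ φ hξ hφ hξ' z hz, pb5 ξ φ hξ hφ hξ' z hz,
      pb6 ξ φ hξ hφ hξ' hφ0 f fb hfb heq z⟩
  · intro z
    show deriv ξ (z 0) * gP ξ φ 1 (z 0) * gQ ξ φ 2 (z 0) * gR ξ φ 3 (z 0) ≠ 0
    simp only [gR, gQ, gP, Matrix.cons_val_zero, Matrix.cons_val_one, Matrix.head_cons,
      vec5_two, vec5_three, vec5_four]
    exact mul_ne_zero (mul_ne_zero (mul_ne_zero (hξ' _)
      (div_ne_zero (hφ0 _) (hξ' _)))
      (div_ne_zero (div_ne_zero (hφ0 _) (hξ' _)) (hξ' _)))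
      (div_ne_zero (div_ne_zero (div_ne_zero (hφ0 _) (hξ' _)) (hξ' _)) (hξ' _))
  · intro z
    refine ⟨rfl, rfl, ?_, ?_⟩
    · show gQ ξ φ 2 (z 0) = _
      simp only [gQ, gP, Matrix.cons_val_zero, Matrix.cons_val_one, Matrix.head_cons,
        vec5_two, vec5_three, vec5_four]
      rw [div_div, sq]
    · show gR ξ φ 3 (z 0) = _
      simp only [gR, gQ, gP, Matrix.cons_val_zero, Matrix.cons_val_one, Matrix.head_cons,
        vec5_two, vec5_three, vec5_four]
      rw [div_div, div_div, pow_succ, sq, mul_assoc]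
end
end

section
/- (Proposition 1, gauge equivalence.) Let D[u] = Σ_{i=0}^{4} fᵢ(x)Dⁱu and D̄[ū] = Σ_{i=0}^{4} f̄ᵢ(x̄)D̄ⁱū be fourth order differential operators with smooth coefficients, and suppose they are gauge equivalent under the fiber-preserving transformation x̄ = ξ(x), ū = φ(x)u (ξ′ ≠ 0, φ ≠ 0): for every smooth u, writing ū(ξ(x)) = φ(x)u(x), one has D̄[ū](ξ(x)) = φ(x)·D[u](x) for all x. Let Φ be the prolongation of the transformation to J⁴, let ω¹,…,ω⁵ be the base coframe, ω⁶ = dI with I = (f₄s + f₃r + f₂q + f₁p)/u + f₀, and let ω̄¹,…,ω̄⁶ be the corresponding forms built from f̄ᵢ in the barred coordinates. Then on {u ≠ 0}: Φ*ω̄¹ = a₁ω¹, Φ*ω̄² = ω², Φ*ω̄³ = a₂ω² + a₃ω³, Φ*ω̄⁴ = a₄ω² + a₅ω³ + a₆ω⁴, Φ*ω̄⁵ = a₇ω² + a₈ω³ + a₉ω⁴ + a₁₀ω⁵, and Φ*ω̄⁶ = ω⁶, for smooth functions a₁,…,a₁₀ with a₁a₃a₆a₁₀ ≠ 0 everywhere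 (indeed a₁ = ξ′, a₃ = φ/ξ′, a₆ = φ/ξ′², a₁₀ = φ/ξ′³). -/
noncomputable section

namespace GE
open scoped BigOperators

lemma coord_apply (i : Fin 6) (X : J) : coord i X = X i := rfl

lemma smooth_diff {g : ℝ → ℝ} (hg : ContDiff ℝ (⊤:ℕ∞) g) : Differentiable ℝ g :=
  hg.differentiable (by simp)

/-- linear-in-fibre functions with variable coefficients -/
def Lc (c : Fin 5 → ℝ → ℝ) : J → ℝ := fun z =>
  c 0 (z 0) * z 1 + c 1 (z 0) * z 2 + c 2 (z 0) * z 3 + c 3 (z 0) * z 4 + c 4 (z 0) * z 5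

/-- total-derivative action on coefficients -/
def Tc (c : Fin 5 → ℝ → ℝ) : Fin 5 → ℝ → ℝ :=
  ![fun x => deriv (c 0) x,
    fun x => deriv (c 1) x + c 0 x,
    fun x => deriv (c 2) x + c 1 x,
    fun x => deriv (c 3) x + c 2 x,
    fun x => deriv (c 4) x + c 3 x]

def Sc (ξ : ℝ → ℝ) (c : Fin 5 → ℝ → ℝ) : Fin 5 → ℝ → ℝ := fun i x => Tc c i x / deriv ξ x

lemma contDiff_deriv {g : ℝ → ℝ} (hg : ContDiff ℝ (⊤:ℕ∞) g) : ContDiff ℝ (⊤:ℕ∞) (deriv g) :=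
  (contDiff_infty_iff_deriv.mp hg).2

lemma contDiff_Tc {c : Fin 5 → ℝ → ℝ} (hc : ∀ i, ContDiff ℝ (⊤:ℕ∞) (c i)) (i : Fin 5) :
    ContDiff ℝ (⊤:ℕ∞) (Tc c i) := by
  fin_cases i <;>
  · show ContDiff ℝ (⊤:ℕ∞) _
    first
      | exact contDiff_deriv (hc _)
      | exact (contDiff_deriv (hc _)).add (hc _)

lemma contDiff_Sc {ξ : ℝ → ℝ} (hξ : ContDiff ℝ (⊤:ℕ∞) ξ) (hξ' : ∀ x, deriv ξ x ≠ 0)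
    {c : Fin 5 → ℝ → ℝ} (hc : ∀ i, ContDiff ℝ (⊤:ℕ∞) (c i)) (i : Fin 5) :
    ContDiff ℝ (⊤:ℕ∞) (Sc ξ c i) :=
  (contDiff_Tc hc i).div (contDiff_deriv hξ) hξ'

/-- derivative of a coefficient function composed with `z 0` -/
lemma hasFDerivAt_comp0 {g : ℝ → ℝ} (hg : ContDiff ℝ (⊤:ℕ∞) g) (z : J) :
    HasFDerivAt (fun w : J => g (w 0)) (deriv g (z 0) • coord 0) z := by
  have h1 : HasDerivAt g (deriv g (z 0)) (z 0) := (smooth_diff hg (z 0)).hasDerivAt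
  exact h1.comp_hasFDerivAt z (coord 0).hasFDerivAt

lemma hasFDerivAt_Lc {c : Fin 5 → ℝ → ℝ} (hc : ∀ i, ContDiff ℝ (⊤:ℕ∞) (c i)) (z : J) :
    HasFDerivAt (Lc c)
      (Lc (fun i => deriv (c i)) z • coord 0
        + (c 0 (z 0) • coord 1 + c 1 (z 0) • coord 2 + c 2 (z 0) • coord 3
            + c 3 (z 0) • coord 4 + c 4 (z 0) • coord 5)) z := by
  have term : ∀ (i : Fin 5) (k : Fin 6), HasFDerivAt (fun w : J => c i (w 0) * w k)
      (c i (z 0) • coord k + (deriv (c i) (z 0) • coord 0).smulRight (coord k z)) z := by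
    intro i k
    exact (hasFDerivAt_comp0 (hc i) z).mul' (coord k).hasFDerivAt
  have h := ((((term 0 1).add (term 1 2)).add (term 2 3)).add (term 3 4)).add (term 4 5)
  refine h.congr_fderiv ?_
  apply ContinuousLinearMap.ext
  intro X
  simp only [ContinuousLinearMap.add_apply, ContinuousLinearMap.smul_apply, coord_apply, Lc,
    ContinuousLinearMap.smulRight_apply, smul_eq_mul]
  ring

lemma Dx_Lc {c : Fin 5 → ℝ → ℝ} (hc : ∀ i, ContDiff ℝ (⊤:ℕ∞) (c i)) (z : J) :
    Dx (Lc c) z = Lc (Tc c) z := by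
  have h := (hasFDerivAt_Lc hc z).fderiv
  simp only [Dx, h, ContinuousLinearMap.add_apply, ContinuousLinearMap.smul_apply, coord_apply,
    smul_eq_mul, Lc]
  have e0 : (![1, z 2, z 3, z 4, z 5, 0] : J) 0 = 1 := rfl
  have e1 : (![1, z 2, z 3, z 4, z 5, 0] : J) 1 = z 2 := rfl
  have e2 : (![1, z 2, z 3, z 4, z 5, 0] : J) 2 = z 3 := rfl
  have e3 : (![1, z 2, z 3, z 4, z 5, 0] : J) 3 = z 4 := rfl
  have e4 : (![1, z 2, z 3, z 4, z 5, 0] : J) 4 = z 5 := rfl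
  have e5 : (![1, z 2, z 3, z 4, z 5, 0] : J) 5 = 0 := rfl
  rw [e0, e1, e2, e3, e4, e5]
  show _ = Tc c 0 (z 0) * z 1 + Tc c 1 (z 0) * z 2 + Tc c 2 (z 0) * z 3
      + Tc c 3 (z 0) * z 4 + Tc c 4 (z 0) * z 5
  show _ = deriv (c 0) (z 0) * z 1 + (deriv (c 1) (z 0) + c 0 (z 0)) * z 2
      + (deriv (c 2) (z 0) + c 1 (z 0)) * z 3 + (deriv (c 3) (z 0) + c 2 (z 0)) * z 4
      + (deriv (c 4) (z 0) + c 3 (z 0)) * z 5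
  ring

end GE
namespace GE

variable (ξ φ : ℝ → ℝ)

def cp : Fin 5 → ℝ → ℝ :=
  ![fun x => deriv φ x / deriv ξ x, fun x => φ x / deriv ξ x, 0, 0, 0]

def cq : Fin 5 → ℝ → ℝ := Sc ξ (cp ξ φ)
def cr : Fin 5 → ℝ → ℝ := Sc ξ (cq ξ φ)
def cs : Fin 5 → ℝ → ℝ := Sc ξ (cr ξ φ)

lemma deriv_zero_fun : deriv (0:ℝ→ℝ) = fun _ => (0:ℝ) := by
  funext x
  rw [show (0:ℝ→ℝ) = (fun _:ℝ => (0:ℝ)) from rfl]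
  simp

lemma pbar_eq : pbar ξ φ = Lc (cp ξ φ) := by
  funext z
  show _ = deriv φ (z 0) / deriv ξ (z 0) * z 1 + φ (z 0) / deriv ξ (z 0) * z 2
      + (0:ℝ→ℝ) (z 0) * z 3 + (0:ℝ→ℝ) (z 0) * z 4 + (0:ℝ→ℝ) (z 0) * z 5
  simp only [Pi.zero_apply, pbar]
  ring

variable {ξ φ} (hξ : ContDiff ℝ (⊤:ℕ∞) ξ) (hφ : ContDiff ℝ (⊤:ℕ∞) φ)
  (hξ' : ∀ x, deriv ξ x ≠ 0) (hφ0 : ∀ x, φ x ≠ 0)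

section
include hξ hφ hξ'

lemma contDiff_cp : ∀ i, ContDiff ℝ (⊤:ℕ∞) (cp ξ φ i) := by
  intro i
  fin_cases i
  · exact (contDiff_deriv hφ).div (contDiff_deriv hξ) hξ'
  · exact hφ.div (contDiff_deriv hξ) hξ'
  all_goals exact contDiff_const

lemma contDiff_cq : ∀ i, ContDiff ℝ (⊤:ℕ∞) (cq ξ φ i) :=
  contDiff_Sc hξ hξ' (contDiff_cp hξ hφ hξ')
lemma contDiff_cr : ∀ i, ContDiff ℝ (⊤:ℕ∞) (cr ξ φ i) :=
  contDiff_Sc hξ hξ' (contDiff_cq hξ hφ hξ')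
lemma contDiff_cs : ∀ i, ContDiff ℝ (⊤:ℕ∞) (cs ξ φ i) :=
  contDiff_Sc hξ hξ' (contDiff_cr hξ hφ hξ')

lemma qbar_eq : qbar ξ φ = Lc (cq ξ φ) := by
  funext z
  show Dx (pbar ξ φ) z / deriv ξ (z 0) = _
  rw [pbar_eq, Dx_Lc (contDiff_cp hξ hφ hξ') z]
  show Lc (Tc (cp ξ φ)) z / deriv ξ (z 0)
      = Tc (cp ξ φ) 0 (z 0) / deriv ξ (z 0) * z 1 + Tc (cp ξ φ) 1 (z 0) / deriv ξ (z 0) * z 2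
      + Tc (cp ξ φ) 2 (z 0) / deriv ξ (z 0) * z 3 + Tc (cp ξ φ) 3 (z 0) / deriv ξ (z 0) * z 4
      + Tc (cp ξ φ) 4 (z 0) / deriv ξ (z 0) * z 5
  simp only [Lc]
  ring

lemma rbar_eq : rbar ξ φ = Lc (cr ξ φ) := by
  funext z
  show Dx (qbar ξ φ) z / deriv ξ (z 0) = _
  rw [qbar_eq hξ hφ hξ', Dx_Lc (contDiff_cq hξ hφ hξ') z]
  show Lc (Tc (cq ξ φ)) z / deriv ξ (z 0)
      = Tc (cq ξ φ) 0 (z 0) / deriv ξ (z 0) * z 1 + Tc (cq ξ φ) 1 (z 0) / deriv ξ (z 0) * z 2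
      + Tc (cq ξ φ) 2 (z 0) / deriv ξ (z 0) * z 3 + Tc (cq ξ φ) 3 (z 0) / deriv ξ (z 0) * z 4
      + Tc (cq ξ φ) 4 (z 0) / deriv ξ (z 0) * z 5
  simp only [Lc]
  ring

lemma sbar_eq : sbar ξ φ = Lc (cs ξ φ) := by
  funext z
  show Dx (rbar ξ φ) z / deriv ξ (z 0) = _
  rw [rbar_eq hξ hφ hξ', Dx_Lc (contDiff_cr hξ hφ hξ') z]
  show Lc (Tc (cr ξ φ)) z / deriv ξ (z 0)
      = Tc (cr ξ φ) 0 (z 0) / deriv ξ (z 0) * z 1 + Tc (cr ξ φ) 1 (z 0) / deriv ξ (z 0) * z 2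
      + Tc (cr ξ φ) 2 (z 0) / deriv ξ (z 0) * z 3 + Tc (cr ξ φ) 3 (z 0) / deriv ξ (z 0) * z 4
      + Tc (cr ξ φ) 4 (z 0) / deriv ξ (z 0) * z 5
  simp only [Lc]
  ring

end

-- zero / diagonal coefficient values
lemma cp2 : cp ξ φ 2 = 0 := rfl
lemma cp3 : cp ξ φ 3 = 0 := rfl
lemma cp4 : cp ξ φ 4 = 0 := rfl

lemma cq3 : cq ξ φ 3 = 0 := by
  funext x
  show (deriv (cp ξ φ 3) x + cp ξ φ 2 x) / deriv ξ x = 0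
  rw [cp2, cp3]
  simp [deriv_zero_fun]

lemma cq4 : cq ξ φ 4 = 0 := by
  funext x
  show (deriv (cp ξ φ 4) x + cp ξ φ 3 x) / deriv ξ x = 0
  rw [cp3, cp4]
  simp [deriv_zero_fun]

lemma cr4 : cr ξ φ 4 = 0 := by
  funext x
  show (deriv (cq ξ φ 4) x + cq ξ φ 3 x) / deriv ξ x = 0
  rw [cq3, cq4]
  simp [deriv_zero_fun]

lemma cp1 : cp ξ φ 1 = fun x => φ x / deriv ξ x := rfl

lemma cq2 : cq ξ φ 2 = fun x => φ x / (deriv ξ x) ^ 2 := by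
  funext x
  show (deriv (cp ξ φ 2) x + cp ξ φ 1 x) / deriv ξ x = _
  rw [cp2, cp1]
  simp [deriv_zero_fun, div_div, sq]

lemma cr3 : cr ξ φ 3 = fun x => φ x / (deriv ξ x) ^ 3 := by
  funext x
  show (deriv (cq ξ φ 3) x + cq ξ φ 2 x) / deriv ξ x = _
  rw [cq3, cq2]
  simp [deriv_zero_fun, div_div]
  ring_nf

end GE
namespace GE

/-- derivative CLM of `Lc c` at `z` -/
def LD (c : Fin 5 → ℝ → ℝ) (z : J) : J →L[ℝ] ℝ :=
  Lc (fun i => deriv (c i)) z • coord 0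
    + (c 0 (z 0) • coord 1 + c 1 (z 0) • coord 2 + c 2 (z 0) • coord 3
        + c 3 (z 0) • coord 4 + c 4 (z 0) • coord 5)

def PD (ξ φ : ℝ → ℝ) (z : J) : Fin 6 → (J →L[ℝ] ℝ) :=
  ![deriv ξ (z 0) • coord 0,
    φ (z 0) • coord 1 + (deriv φ (z 0) • coord 0).smulRight (z 1),
    LD (cp ξ φ) z, LD (cq ξ φ) z, LD (cr ξ φ) z, LD (cs ξ φ) z]

variable {ξ φ : ℝ → ℝ} (hξ : ContDiff ℝ (⊤:ℕ∞) ξ) (hφ : ContDiff ℝ (⊤:ℕ∞) φ)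
  (hξ' : ∀ x, deriv ξ x ≠ 0) (hφ0 : ∀ x, φ x ≠ 0)

include hξ hφ hξ' in
lemma hasFDerivAt_Prolong (z : J) :
    HasFDerivAt (Prolong ξ φ) (ContinuousLinearMap.pi (PD ξ φ z)) z := by
  have : HasFDerivAt (fun w i => Prolong ξ φ w i) (ContinuousLinearMap.pi (PD ξ φ z)) z := by
    rw [hasFDerivAt_pi]
    intro i
    fin_cases i
    · show HasFDerivAt (fun w : J => ξ (w 0)) (deriv ξ (z 0) • coord 0) z
      exact hasFDerivAt_comp0 hξ z
    · show HasFDerivAt (fun w : J => φ (w 0) * w 1)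
        (φ (z 0) • coord 1 + (deriv φ (z 0) • coord 0).smulRight (z 1)) z
      exact (hasFDerivAt_comp0 hφ z).mul' (coord 1).hasFDerivAt
    · show HasFDerivAt (pbar ξ φ) (LD (cp ξ φ) z) z
      rw [pbar_eq]
      exact hasFDerivAt_Lc (contDiff_cp hξ hφ hξ') z
    · show HasFDerivAt (qbar ξ φ) (LD (cq ξ φ) z) z
      rw [qbar_eq hξ hφ hξ']
      exact hasFDerivAt_Lc (contDiff_cq hξ hφ hξ') z
    · show HasFDerivAt (rbar ξ φ) (LD (cr ξ φ) z) z
      rw [rbar_eq hξ hφ hξ']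
      exact hasFDerivAt_Lc (contDiff_cr hξ hφ hξ') z
    · show HasFDerivAt (sbar ξ φ) (LD (cs ξ φ) z) z
      rw [sbar_eq hξ hφ hξ']
      exact hasFDerivAt_Lc (contDiff_cs hξ hφ hξ') z
  exact this

include hξ hφ hξ' in
lemma fderiv_Prolong (z : J) :
    fderiv ℝ (Prolong ξ φ) z = ContinuousLinearMap.pi (PD ξ φ z) :=
  (hasFDerivAt_Prolong hξ hφ hξ' z).fderiv

/-- the triangular pullback structure for the fibre forms -/
lemma pull_lin (c : Fin 5 → ℝ → ℝ) (z : J) (hz : z 1 ≠ 0) :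
    LD c z - Lc (Tc c) z • coord 0
      = (z 1 * c 0 (z 0)) • ω2 z + c 1 (z 0) • ω3 z + c 2 (z 0) • ω4 z + c 3 (z 0) • ω5 z
      + c 4 (z 0) • coord 5 := by
  apply ContinuousLinearMap.ext
  intro X
  have hT0 : Tc c 0 (z 0) = deriv (c 0) (z 0) := rfl
  have hT1 : Tc c 1 (z 0) = deriv (c 1) (z 0) + c 0 (z 0) := rfl
  have hT2 : Tc c 2 (z 0) = deriv (c 2) (z 0) + c 1 (z 0) := rfl
  have hT3 : Tc c 3 (z 0) = deriv (c 3) (z 0) + c 2 (z 0) := rfl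
  have hT4 : Tc c 4 (z 0) = deriv (c 4) (z 0) + c 3 (z 0) := rfl
  simp only [LD, Lc, hT0, hT1, hT2, hT3, hT4, ω2, ω3, ω4, ω5,
    ContinuousLinearMap.add_apply, ContinuousLinearMap.sub_apply,
    ContinuousLinearMap.smul_apply, ContinuousLinearMap.coe_smul', Pi.smul_apply,
    ContinuousLinearMap.coe_sub', Pi.sub_apply, coord_apply, smul_eq_mul]
  field_simp
  ring

end GE
namespace GE

variable {ξ φ : ℝ → ℝ} (hξ : ContDiff ℝ (⊤:ℕ∞) ξ) (hφ : ContDiff ℝ (⊤:ℕ∞) φ)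
  (hξ' : ∀ x, deriv ξ x ≠ 0) (hφ0 : ∀ x, φ x ≠ 0)

lemma pullback_apply (Φ : J → J) (ω : OneForm) (z X : J) :
    pullback Φ ω z X = ω (Φ z) (fderiv ℝ Φ z X) := rfl

include hξ hφ hξ' in
lemma pull_ω1 (z : J) : pullback (Prolong ξ φ) ω1 z = deriv ξ (z 0) • ω1 z := by
  apply ContinuousLinearMap.ext
  intro X
  rw [pullback_apply, fderiv_Prolong hξ hφ hξ']
  show PD ξ φ z 0 X = deriv ξ (z 0) • ω1 z X
  show deriv ξ (z 0) * X 0 = deriv ξ (z 0) * X 0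
  rfl

include hξ hφ hξ' hφ0 in
lemma pull_ω2 (z : J) (hz : z 1 ≠ 0) : pullback (Prolong ξ φ) ω2 z = ω2 z := by
  apply ContinuousLinearMap.ext
  intro X
  rw [pullback_apply, fderiv_Prolong hξ hφ hξ']
  show (φ (z 0) * z 1)⁻¹ * (PD ξ φ z 1 X - pbar ξ φ z * PD ξ φ z 0 X)
      = (z 1)⁻¹ * (X 1 - z 2 * X 0)
  show (φ (z 0) * z 1)⁻¹ * ((φ (z 0) * X 1 + (deriv φ (z 0) * X 0) * z 1)
      - (deriv φ (z 0) * z 1 + φ (z 0) * z 2) / deriv ξ (z 0) * (deriv ξ (z 0) * X 0))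
      = (z 1)⁻¹ * (X 1 - z 2 * X 0)
  have h1 := hφ0 (z 0)
  have h2 := hξ' (z 0)
  field_simp
  ring

include hξ hφ hξ' in
lemma pull_ω3 (z : J) (hz : z 1 ≠ 0) :
    pullback (Prolong ξ φ) ω3 z
      = (z 1 * cp ξ φ 0 (z 0)) • ω2 z + cp ξ φ 1 (z 0) • ω3 z := by
  have step : pullback (Prolong ξ φ) ω3 z = LD (cp ξ φ) z - Lc (Tc (cp ξ φ)) z • coord 0 := by
    apply ContinuousLinearMap.ext
    intro X
    rw [pullback_apply, fderiv_Prolong hξ hφ hξ']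
    show LD (cp ξ φ) z X - qbar ξ φ z * (deriv ξ (z 0) * X 0) = _
    have : qbar ξ φ z * deriv ξ (z 0) = Lc (Tc (cp ξ φ)) z := by
      show Dx (pbar ξ φ) z / deriv ξ (z 0) * deriv ξ (z 0) = _
      rw [div_mul_cancel₀ _ (hξ' (z 0)), pbar_eq, Dx_Lc (contDiff_cp hξ hφ hξ')]
    rw [show qbar ξ φ z * (deriv ξ (z 0) * X 0) = qbar ξ φ z * deriv ξ (z 0) * X 0 by ring, this]
    rfl
  rw [step, pull_lin _ z hz, cp2, cp3, cp4]
  simp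

include hξ hφ hξ' in
lemma pull_ω4 (z : J) (hz : z 1 ≠ 0) :
    pullback (Prolong ξ φ) ω4 z
      = (z 1 * cq ξ φ 0 (z 0)) • ω2 z + cq ξ φ 1 (z 0) • ω3 z + cq ξ φ 2 (z 0) • ω4 z := by
  have step : pullback (Prolong ξ φ) ω4 z = LD (cq ξ φ) z - Lc (Tc (cq ξ φ)) z • coord 0 := by
    apply ContinuousLinearMap.ext
    intro X
    rw [pullback_apply, fderiv_Prolong hξ hφ hξ']
    show LD (cq ξ φ) z X - rbar ξ φ z * (deriv ξ (z 0) * X 0) = _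
    have : rbar ξ φ z * deriv ξ (z 0) = Lc (Tc (cq ξ φ)) z := by
      show Dx (qbar ξ φ) z / deriv ξ (z 0) * deriv ξ (z 0) = _
      rw [div_mul_cancel₀ _ (hξ' (z 0)), qbar_eq hξ hφ hξ', Dx_Lc (contDiff_cq hξ hφ hξ')]
    rw [show rbar ξ φ z * (deriv ξ (z 0) * X 0) = rbar ξ φ z * deriv ξ (z 0) * X 0 by ring, this]
    rfl
  rw [step, pull_lin _ z hz, cq3, cq4]
  simp [add_assoc]

include hξ hφ hξ' in
lemma pull_ω5 (z : J) (hz : z 1 ≠ 0) :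
    pullback (Prolong ξ φ) ω5 z
      = (z 1 * cr ξ φ 0 (z 0)) • ω2 z + cr ξ φ 1 (z 0) • ω3 z + cr ξ φ 2 (z 0) • ω4 z
        + cr ξ φ 3 (z 0) • ω5 z := by
  have step : pullback (Prolong ξ φ) ω5 z = LD (cr ξ φ) z - Lc (Tc (cr ξ φ)) z • coord 0 := by
    apply ContinuousLinearMap.ext
    intro X
    rw [pullback_apply, fderiv_Prolong hξ hφ hξ']
    show LD (cr ξ φ) z X - sbar ξ φ z * (deriv ξ (z 0) * X 0) = _
    have : sbar ξ φ z * deriv ξ (z 0) = Lc (Tc (cr ξ φ)) z := by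
      show Dx (rbar ξ φ) z / deriv ξ (z 0) * deriv ξ (z 0) = _
      rw [div_mul_cancel₀ _ (hξ' (z 0)), rbar_eq hξ hφ hξ', Dx_Lc (contDiff_cr hξ hφ hξ')]
    rw [show sbar ξ φ z * (deriv ξ (z 0) * X 0) = sbar ξ φ z * deriv ξ (z 0) * X 0 by ring, this]
    rfl
  rw [step, pull_lin _ z hz, cr4]
  simp [add_assoc]

end GE
namespace GE

lemma smooth_iter {u : ℝ → ℝ} (hu : ContDiff ℝ (⊤:ℕ∞) u) (k : ℕ) :
    ContDiff ℝ (⊤:ℕ∞) (iteratedDeriv k u) := by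
  induction k generalizing u with
  | zero => simpa [iteratedDeriv_zero] using hu
  | succ n ih => rw [iteratedDeriv_succ']; exact ih (contDiff_deriv hu)

lemma hasDerivAt_iter {u : ℝ → ℝ} (hu : ContDiff ℝ (⊤:ℕ∞) u) (k : ℕ) (x : ℝ) :
    HasDerivAt (iteratedDeriv k u) (iteratedDeriv (k+1) u x) x := by
  have h := (smooth_diff (smooth_iter hu k) x).hasDerivAt
  rwa [show deriv (iteratedDeriv k u) x = iteratedDeriv (k+1) u x by
    rw [iteratedDeriv_succ]] at h

/-- the 4-jet of a function -/
def jU (u : ℝ → ℝ) (x : ℝ) : J :=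
  ![x, u x, deriv u x, iteratedDeriv 2 u x, iteratedDeriv 3 u x, iteratedDeriv 4 u x]

lemma jet_deriv {c : Fin 5 → ℝ → ℝ} (hc : ∀ i, ContDiff ℝ (⊤:ℕ∞) (c i)) (hc4 : c 4 = 0)
    {u : ℝ → ℝ} (hu : ContDiff ℝ (⊤:ℕ∞) u) (x : ℝ) :
    HasDerivAt (fun y => Lc c (jU u y)) (Lc (Tc c) (jU u x)) x := by
  have e : (fun y => Lc c (jU u y))
      = fun y => c 0 y * iteratedDeriv 0 u y + c 1 y * iteratedDeriv 1 u y
          + c 2 y * iteratedDeriv 2 u y + c 3 y * iteratedDeriv 3 u y := by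
    funext y
    show c 0 y * u y + c 1 y * deriv u y + c 2 y * iteratedDeriv 2 u y
        + c 3 y * iteratedDeriv 3 u y + c 4 y * iteratedDeriv 4 u y = _
    rw [hc4]
    simp [iteratedDeriv_one]
  rw [e]
  have h0 := ((smooth_diff (hc 0) x).hasDerivAt).mul (hasDerivAt_iter hu 0 x)
  have h1 := ((smooth_diff (hc 1) x).hasDerivAt).mul (hasDerivAt_iter hu 1 x)
  have h2 := ((smooth_diff (hc 2) x).hasDerivAt).mul (hasDerivAt_iter hu 2 x)
  have h3 := ((smooth_diff (hc 3) x).hasDerivAt).mul (hasDerivAt_iter hu 3 x)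
  have h := ((h0.add h1).add h2).add h3
  refine h.congr_deriv ?_
  symm
  show Tc c 0 x * u x + Tc c 1 x * deriv u x + Tc c 2 x * iteratedDeriv 2 u x
      + Tc c 3 x * iteratedDeriv 3 u x + Tc c 4 x * iteratedDeriv 4 u x = _
  show deriv (c 0) x * u x + (deriv (c 1) x + c 0 x) * deriv u x
      + (deriv (c 2) x + c 1 x) * iteratedDeriv 2 u x
      + (deriv (c 3) x + c 2 x) * iteratedDeriv 3 u x
      + (deriv (c 4) x + c 3 x) * iteratedDeriv 4 u x = _
  rw [hc4, deriv_zero_fun]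
  simp [iteratedDeriv_one]
  ring

variable {ξ φ : ℝ → ℝ} (hξ : ContDiff ℝ (⊤:ℕ∞) ξ) (hφ : ContDiff ℝ (⊤:ℕ∞) φ)
  (hξ' : ∀ x, deriv ξ x ≠ 0) (hφ0 : ∀ x, φ x ≠ 0)

include hξ in
lemma chainv {v : ℝ → ℝ} (hv : ContDiff ℝ (⊤:ℕ∞) v) (k : ℕ) (x : ℝ) :
    HasDerivAt (fun y => iteratedDeriv k v (ξ y)) (iteratedDeriv (k+1) v (ξ x) * deriv ξ x) x :=
  (hasDerivAt_iter hv k (ξ x)).comp x (smooth_diff hξ x).hasDerivAt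

section
variable {u v : ℝ → ℝ} (hu : ContDiff ℝ (⊤:ℕ∞) u) (hv : ContDiff ℝ (⊤:ℕ∞) v)
  (hveq : ∀ x, v (ξ x) = φ x * u x)

include hξ hφ hξ' hu hv hveq

lemma jet1 : ∀ x, pbar ξ φ (jU u x) = deriv v (ξ x) := by
  intro x
  have hl : HasDerivAt (fun y => v (ξ y)) (deriv v (ξ x) * deriv ξ x) x := by
    have := chainv hξ hv 0 x
    simpa [iteratedDeriv_zero, iteratedDeriv_one] using this
  have hr : HasDerivAt (fun y => φ y * u y) (deriv φ x * u x + φ x * deriv u x) x :=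
    ((smooth_diff hφ x).hasDerivAt).mul (smooth_diff hu x).hasDerivAt
  rw [show (fun y => v (ξ y)) = fun y => φ y * u y from funext hveq] at hl
  have huniq := hl.unique hr
  show (deriv φ x * u x + φ x * deriv u x) / deriv ξ x = _
  rw [← huniq, mul_div_cancel_right₀ _ (hξ' x)]

lemma jet2 : ∀ x, qbar ξ φ (jU u x) = iteratedDeriv 2 v (ξ x) := by
  intro x
  show Dx (pbar ξ φ) (jU u x) / deriv ξ x = _
  rw [pbar_eq, Dx_Lc (contDiff_cp hξ hφ hξ')]
  have hd := (jet_deriv (contDiff_cp hξ hφ hξ') (cp4 (ξ := ξ) (φ := φ)) hu x).deriv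
  rw [← hd]
  have e : (fun y => Lc (cp ξ φ) (jU u y)) = fun y => iteratedDeriv 1 v (ξ y) := by
    funext y
    rw [← pbar_eq, jet1 hξ hφ hξ' hu hv hveq y, iteratedDeriv_one]
  rw [e, (chainv hξ hv 1 x).deriv, mul_div_cancel_right₀ _ (hξ' x)]

lemma jet3 : ∀ x, rbar ξ φ (jU u x) = iteratedDeriv 3 v (ξ x) := by
  intro x
  show Dx (qbar ξ φ) (jU u x) / deriv ξ x = _
  rw [qbar_eq hξ hφ hξ', Dx_Lc (contDiff_cq hξ hφ hξ')]
  have hd := (jet_deriv (contDiff_cq hξ hφ hξ') (cq4 (ξ := ξ) (φ := φ)) hu x).deriv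
  rw [← hd]
  have e : (fun y => Lc (cq ξ φ) (jU u y)) = fun y => iteratedDeriv 2 v (ξ y) := by
    funext y
    rw [← qbar_eq hξ hφ hξ', jet2 hξ hφ hξ' hu hv hveq y]
  rw [e, (chainv hξ hv 2 x).deriv, mul_div_cancel_right₀ _ (hξ' x)]

lemma jet4 : ∀ x, sbar ξ φ (jU u x) = iteratedDeriv 4 v (ξ x) := by
  intro x
  show Dx (rbar ξ φ) (jU u x) / deriv ξ x = _
  rw [rbar_eq hξ hφ hξ', Dx_Lc (contDiff_cr hξ hφ hξ')]
  have hd := (jet_deriv (contDiff_cr hξ hφ hξ') (cr4 (ξ := ξ) (φ := φ)) hu x).deriv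
  rw [← hd]
  have e : (fun y => Lc (cr ξ φ) (jU u y)) = fun y => iteratedDeriv 3 v (ξ y) := by
    funext y
    rw [← rbar_eq hξ hφ hξ', jet3 hξ hφ hξ' hu hv hveq y]
  rw [e, (chainv hξ hv 3 x).deriv, mul_div_cancel_right₀ _ (hξ' x)]

end

end GE
namespace GE

variable {ξ : ℝ → ℝ} (hξ : ContDiff ℝ (⊤:ℕ∞) ξ)

include hξ in
lemma deriv_pow_mul (x0 : ℝ) (m : ℕ) {H : ℝ → ℝ} (hH : ContDiff ℝ (⊤:ℕ∞) H) :
    deriv (fun x => (ξ x - ξ x0) ^ (m + 1) * H x)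
      = fun x => (ξ x - ξ x0) ^ m
          * (((m:ℝ) + 1) * deriv ξ x * H x + (ξ x - ξ x0) * deriv H x) := by
  funext x
  have h1 : HasDerivAt (fun x => ξ x - ξ x0) (deriv ξ x) x :=
    (smooth_diff hξ x).hasDerivAt.sub_const _
  have hpow := h1.pow (m + 1)
  have h := hpow.mul (smooth_diff hH x).hasDerivAt
  rw [show (fun x => (ξ x - ξ x0) ^ (m + 1) * H x) = (fun x => ξ x - ξ x0) ^ (m + 1) * H from rfl,
    h.deriv]
  simp only [Pi.pow_apply, Nat.add_sub_cancel]
  push_cast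
  ring

include hξ in
lemma lemA (x0 : ℝ) : ∀ (i m : ℕ) (H : ℝ → ℝ), ContDiff ℝ (⊤:ℕ∞) H → i < m →
    iteratedDeriv i (fun x => (ξ x - ξ x0) ^ m * H x) x0 = 0 := by
  intro i
  induction i with
  | zero =>
    intro m H hH him
    have hm : m ≠ 0 := by omega
    simp only [iteratedDeriv_zero, sub_self, zero_pow hm]
    ring
  | succ n ih =>
    intro m H hH him
    obtain ⟨m', rfl⟩ : ∃ m', m = m' + 1 := ⟨m - 1, by omega⟩
    rw [iteratedDeriv_succ', deriv_pow_mul hξ x0 m' hH]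
    exact ih m' _ ((((contDiff_const.mul (contDiff_deriv hξ)).mul hH).add
      (((hξ.sub contDiff_const)).mul (contDiff_deriv hH)))) (by omega)

include hξ in
lemma lemB (x0 : ℝ) : ∀ (m : ℕ) (H : ℝ → ℝ), ContDiff ℝ (⊤:ℕ∞) H →
    iteratedDeriv m (fun x => (ξ x - ξ x0) ^ m * H x) x0
      = (m.factorial : ℝ) * (deriv ξ x0) ^ m * H x0 := by
  intro m
  induction m with
  | zero => intro H hH; simp
  | succ n ih =>
    intro H hH
    rw [iteratedDeriv_succ', deriv_pow_mul hξ x0 n hH,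
      ih _ ((((contDiff_const.mul (contDiff_deriv hξ)).mul hH).add
        (((hξ.sub contDiff_const)).mul (contDiff_deriv hH))))]
    rw [sub_self, Nat.factorial_succ]
    push_cast
    ring

end GE
namespace GE

def CU (φ : ℝ → ℝ) : Fin 5 → ℝ → ℝ := ![φ, 0, 0, 0, 0]

def CC (ξ φ : ℝ → ℝ) (fb : Fin 5 → ℝ → ℝ) : Fin 5 → ℝ → ℝ := fun i x =>
  fb 0 (ξ x) * CU φ i x + fb 1 (ξ x) * cp ξ φ i x + fb 2 (ξ x) * cq ξ φ i x
    + fb 3 (ξ x) * cr ξ φ i x + fb 4 (ξ x) * cs ξ φ i x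

variable {ξ φ : ℝ → ℝ} (hξ : ContDiff ℝ (⊤:ℕ∞) ξ) (hφ : ContDiff ℝ (⊤:ℕ∞) φ)
  (hξ' : ∀ x, deriv ξ x ≠ 0) (hφ0 : ∀ x, φ x ≠ 0)

include hξ hφ hξ' in
lemma Idir_Prolong (fb : Fin 5 → ℝ → ℝ) (z : J) :
    Idir fb (Prolong ξ φ z) = Lc (CC ξ φ fb) z := by
  show fb 4 (ξ (z 0)) * sbar ξ φ z + fb 3 (ξ (z 0)) * rbar ξ φ z + fb 2 (ξ (z 0)) * qbar ξ φ z
      + fb 1 (ξ (z 0)) * pbar ξ φ z + fb 0 (ξ (z 0)) * (φ (z 0) * z 1) = _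
  rw [pbar_eq, qbar_eq hξ hφ hξ', rbar_eq hξ hφ hξ', sbar_eq hξ hφ hξ']
  have e0 : ∀ x, CU φ 0 x = φ x := fun _ => rfl
  have e1 : ∀ x, CU φ 1 x = 0 := fun _ => rfl
  have e2 : ∀ x, CU φ 2 x = 0 := fun _ => rfl
  have e3 : ∀ x, CU φ 3 x = 0 := fun _ => rfl
  have e4 : ∀ x, CU φ 4 x = 0 := fun _ => rfl
  simp only [Lc, CC, e0, e1, e2, e3, e4]
  ring

variable {f fb : Fin 5 → ℝ → ℝ}
  (heq : ∀ u v : ℝ → ℝ, ContDiff ℝ (⊤ : ℕ∞) u → ContDiff ℝ (⊤ : ℕ∞) v →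
      (∀ x, v (ξ x) = φ x * u x) →
      ∀ x, ∑ i : Fin 5, fb i (ξ x) * iteratedDeriv i.1 v (ξ x)
         = φ x * ∑ i : Fin 5, f i x * iteratedDeriv i.1 u x)

include hξ hφ hξ' heq in
lemma main_jet {u v : ℝ → ℝ} (hu : ContDiff ℝ (⊤:ℕ∞) u) (hv : ContDiff ℝ (⊤:ℕ∞) v)
    (hveq : ∀ x, v (ξ x) = φ x * u x) (x : ℝ) :
    CC ξ φ fb 0 x * iteratedDeriv 0 u x + CC ξ φ fb 1 x * iteratedDeriv 1 u x
      + CC ξ φ fb 2 x * iteratedDeriv 2 u x + CC ξ φ fb 3 x * iteratedDeriv 3 u x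
      + CC ξ φ fb 4 x * iteratedDeriv 4 u x
    = φ x * (f 0 x * iteratedDeriv 0 u x + f 1 x * iteratedDeriv 1 u x
      + f 2 x * iteratedDeriv 2 u x + f 3 x * iteratedDeriv 3 u x
      + f 4 x * iteratedDeriv 4 u x) := by
  have h := heq u v hu hv hveq x
  rw [Fin.sum_univ_five, Fin.sum_univ_five] at h
  simp only [show ((0:Fin 5):ℕ) = 0 from rfl, show ((1:Fin 5):ℕ) = 1 from rfl,
    show ((2:Fin 5):ℕ) = 2 from rfl, show ((3:Fin 5):ℕ) = 3 from rfl,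
    show ((4:Fin 5):ℕ) = 4 from rfl, iteratedDeriv_zero, iteratedDeriv_one] at h
  have hP : Prolong ξ φ (jU u x) = ![ξ x, v (ξ x), deriv v (ξ x), iteratedDeriv 2 v (ξ x),
      iteratedDeriv 3 v (ξ x), iteratedDeriv 4 v (ξ x)] := by
    funext i
    fin_cases i
    · rfl
    · show φ x * u x = v (ξ x); exact (hveq x).symm
    · exact jet1 hξ hφ hξ' hu hv hveq x
    · exact jet2 hξ hφ hξ' hu hv hveq x
    · exact jet3 hξ hφ hξ' hu hv hveq x
    · exact jet4 hξ hφ hξ' hu hv hveq x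
  have hL : Lc (CC ξ φ fb) (jU u x)
      = fb 0 (ξ x) * v (ξ x) + fb 1 (ξ x) * deriv v (ξ x) + fb 2 (ξ x) * iteratedDeriv 2 v (ξ x)
        + fb 3 (ξ x) * iteratedDeriv 3 v (ξ x) + fb 4 (ξ x) * iteratedDeriv 4 v (ξ x) := by
    rw [← Idir_Prolong hξ hφ hξ', hP]
    show fb 4 (ξ x) * iteratedDeriv 4 v (ξ x) + fb 3 (ξ x) * iteratedDeriv 3 v (ξ x)
        + fb 2 (ξ x) * iteratedDeriv 2 v (ξ x) + fb 1 (ξ x) * deriv v (ξ x)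
        + fb 0 (ξ x) * v (ξ x) = _
    ring
  have hLc : Lc (CC ξ φ fb) (jU u x)
      = CC ξ φ fb 0 x * u x + CC ξ φ fb 1 x * deriv u x
        + CC ξ φ fb 2 x * iteratedDeriv 2 u x + CC ξ φ fb 3 x * iteratedDeriv 3 u x
        + CC ξ φ fb 4 x * iteratedDeriv 4 u x := rfl
  simp only [iteratedDeriv_zero, iteratedDeriv_one]
  rw [← hLc, hL]
  exact h

include hξ hφ hξ' hφ0 heq in
lemma CC_eq (i : Fin 5) (x0 : ℝ) : CC ξ φ fb i x0 = φ x0 * f i x0 := by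
  have hjA : ∀ i m : ℕ, i < m →
      iteratedDeriv i (fun x => (ξ x - ξ x0) ^ m * (φ x)⁻¹) x0 = 0 :=
    fun i m him => lemA hξ x0 i m _ (hφ.inv hφ0) him
  have hjB : ∀ m : ℕ, iteratedDeriv m (fun x => (ξ x - ξ x0) ^ m * (φ x)⁻¹) x0
      = (m.factorial : ℝ) * (deriv ξ x0) ^ m * (φ x0)⁻¹ :=
    fun m => lemB hξ x0 m _ (hφ.inv hφ0)
  have ht : ∀ m : ℕ, (m.factorial : ℝ) * (deriv ξ x0) ^ m * (φ x0)⁻¹ ≠ 0 := fun m =>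
    mul_ne_zero (mul_ne_zero (Nat.cast_ne_zero.mpr m.factorial_ne_zero)
      (pow_ne_zero _ (hξ' x0))) (inv_ne_zero (hφ0 x0))
  have E : ∀ j : ℕ,
      CC ξ φ fb 0 x0 * iteratedDeriv 0 (fun x => (ξ x - ξ x0) ^ j * (φ x)⁻¹) x0
      + CC ξ φ fb 1 x0 * iteratedDeriv 1 (fun x => (ξ x - ξ x0) ^ j * (φ x)⁻¹) x0
      + CC ξ φ fb 2 x0 * iteratedDeriv 2 (fun x => (ξ x - ξ x0) ^ j * (φ x)⁻¹) x0
      + CC ξ φ fb 3 x0 * iteratedDeriv 3 (fun x => (ξ x - ξ x0) ^ j * (φ x)⁻¹) x0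
      + CC ξ φ fb 4 x0 * iteratedDeriv 4 (fun x => (ξ x - ξ x0) ^ j * (φ x)⁻¹) x0
      = φ x0 * (f 0 x0 * iteratedDeriv 0 (fun x => (ξ x - ξ x0) ^ j * (φ x)⁻¹) x0
      + f 1 x0 * iteratedDeriv 1 (fun x => (ξ x - ξ x0) ^ j * (φ x)⁻¹) x0
      + f 2 x0 * iteratedDeriv 2 (fun x => (ξ x - ξ x0) ^ j * (φ x)⁻¹) x0
      + f 3 x0 * iteratedDeriv 3 (fun x => (ξ x - ξ x0) ^ j * (φ x)⁻¹) x0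
      + f 4 x0 * iteratedDeriv 4 (fun x => (ξ x - ξ x0) ^ j * (φ x)⁻¹) x0) := by
    intro j
    apply main_jet hξ hφ hξ' heq
        (((hξ.sub contDiff_const).pow j).mul (hφ.inv hφ0))
        ((contDiff_id.sub contDiff_const).pow j)
    intro x
    show (ξ x - ξ x0) ^ j = φ x * ((ξ x - ξ x0) ^ j * (φ x)⁻¹)
    rw [mul_comm (φ x), mul_assoc, inv_mul_cancel₀ (hφ0 x), mul_one]
  have E4 := E 4
  rw [hjA 0 4 (by norm_num), hjA 1 4 (by norm_num), hjA 2 4 (by norm_num),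
    hjA 3 4 (by norm_num), hjB 4] at E4
  have h4 : CC ξ φ fb 4 x0 = φ x0 * f 4 x0 := by
    apply mul_right_cancel₀ (ht 4)
    linear_combination E4
  have E3 := E 3
  rw [hjA 0 3 (by norm_num), hjA 1 3 (by norm_num), hjA 2 3 (by norm_num), hjB 3, h4] at E3
  have h3 : CC ξ φ fb 3 x0 = φ x0 * f 3 x0 := by
    apply mul_right_cancel₀ (ht 3)
    linear_combination E3
  have E2 := E 2
  rw [hjA 0 2 (by norm_num), hjA 1 2 (by norm_num), hjB 2, h4, h3] at E2
  have h2 : CC ξ φ fb 2 x0 = φ x0 * f 2 x0 := by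
    apply mul_right_cancel₀ (ht 2)
    linear_combination E2
  have E1 := E 1
  rw [hjA 0 1 (by norm_num), hjB 1, h4, h3, h2] at E1
  have h1 : CC ξ φ fb 1 x0 = φ x0 * f 1 x0 := by
    apply mul_right_cancel₀ (ht 1)
    linear_combination E1
  have E0 := E 0
  rw [hjB 0, h4, h3, h2, h1] at E0
  have h0 : CC ξ φ fb 0 x0 = φ x0 * f 0 x0 := by
    apply mul_right_cancel₀ (ht 0)
    linear_combination E0
  fin_cases i
  exacts [h0, h1, h2, h3, h4]

end GE
namespace GE

variable {ξ φ : ℝ → ℝ} (hξ : ContDiff ℝ (⊤:ℕ∞) ξ) (hφ : ContDiff ℝ (⊤:ℕ∞) φ)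
  (hξ' : ∀ x, deriv ξ x ≠ 0) (hφ0 : ∀ x, φ x ≠ 0)
  {f fb : Fin 5 → ℝ → ℝ}
  (hfb : ∀ i, ContDiff ℝ (⊤ : ℕ∞) (fb i))
  (heq : ∀ u v : ℝ → ℝ, ContDiff ℝ (⊤ : ℕ∞) u → ContDiff ℝ (⊤ : ℕ∞) v →
      (∀ x, v (ξ x) = φ x * u x) →
      ∀ x, ∑ i : Fin 5, fb i (ξ x) * iteratedDeriv i.1 v (ξ x)
         = φ x * ∑ i : Fin 5, f i x * iteratedDeriv i.1 u x)

include hξ hφ hξ' hφ0 heq in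
lemma key_Idir (z : J) : Idir fb (Prolong ξ φ z) = φ (z 0) * Idir f z := by
  rw [Idir_Prolong hξ hφ hξ']
  show Lc (CC ξ φ fb) z = _
  simp only [Lc]
  rw [CC_eq hξ hφ hξ' hφ0 heq 0 (z 0), CC_eq hξ hφ hξ' hφ0 heq 1 (z 0),
    CC_eq hξ hφ hξ' hφ0 heq 2 (z 0), CC_eq hξ hφ hξ' hφ0 heq 3 (z 0),
    CC_eq hξ hφ hξ' hφ0 heq 4 (z 0)]
  show _ = φ (z 0) * (f 4 (z 0) * z 5 + f 3 (z 0) * z 4 + f 2 (z 0) * z 3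
      + f 1 (z 0) * z 2 + f 0 (z 0) * z 1)
  ring

lemma Igau_div (g : Fin 5 → ℝ → ℝ) (w : J) (hw : w 1 ≠ 0) : Igau g w = Idir g w / w 1 := by
  show (g 4 (w 0) * w 5 + g 3 (w 0) * w 4 + g 2 (w 0) * w 3 + g 1 (w 0) * w 2) / w 1 + g 0 (w 0)
      = (g 4 (w 0) * w 5 + g 3 (w 0) * w 4 + g 2 (w 0) * w 3 + g 1 (w 0) * w 2 + g 0 (w 0) * w 1)
        / w 1
  field_simp

include hξ hφ hξ' hφ0 heq in
lemma key_Igau (z : J) (hz : z 1 ≠ 0) : Igau fb (Prolong ξ φ z) = Igau f z := by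
  have h1 : Prolong ξ φ z 1 = φ (z 0) * z 1 := rfl
  have hP1 : Prolong ξ φ z 1 ≠ 0 := by rw [h1]; exact mul_ne_zero (hφ0 (z 0)) hz
  rw [Igau_div fb _ hP1, Igau_div f z hz, key_Idir hξ hφ hξ' hφ0 heq, h1,
    mul_div_mul_left _ _ (hφ0 (z 0))]

lemma diff_Igau (g : Fin 5 → ℝ → ℝ) (hg : ∀ i, ContDiff ℝ (⊤ : ℕ∞) (g i)) (w : J)
    (hw : w 1 ≠ 0) : DifferentiableAt ℝ (Igau g) w := by
  have dproj : ∀ k : Fin 6, DifferentiableAt ℝ (fun w : J => w k) w := fun k =>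
    (ContinuousLinearMap.proj k : J →L[ℝ] ℝ).differentiableAt
  have dg : ∀ i : Fin 5, DifferentiableAt ℝ (fun w : J => g i (w 0)) w := fun i =>
    (smooth_diff (hg i) (w 0)).comp w (dproj 0)
  have e : Igau g = fun w : J => (g 4 (w 0) * w 5 + g 3 (w 0) * w 4
      + g 2 (w 0) * w 3 + g 1 (w 0) * w 2) * (w 1)⁻¹ + g 0 (w 0) := by
    funext w
    rw [Igau, div_eq_mul_inv]
  rw [e]
  have hnum : DifferentiableAt ℝ (fun w : J => g 4 (w 0) * w 5 + g 3 (w 0) * w 4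
      + g 2 (w 0) * w 3 + g 1 (w 0) * w 2) w :=
    ((((dg 4).mul (dproj 5)).add ((dg 3).mul (dproj 4))).add
        ((dg 2).mul (dproj 3))).add ((dg 1).mul (dproj 2))
  exact (hnum.mul ((dproj 1).inv hw)).add (dg 0)

include hξ hφ hξ' hφ0 hfb heq in
lemma pull_ω6 (z : J) (hz : z 1 ≠ 0) :
    pullback (Prolong ξ φ) (fun w => fderiv ℝ (Igau fb) w) z = fderiv ℝ (Igau f) z := by
  have hdΦ : DifferentiableAt ℝ (Prolong ξ φ) z := (hasFDerivAt_Prolong hξ hφ hξ' z).differentiableAt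
  have hP1 : Prolong ξ φ z 1 ≠ 0 := mul_ne_zero (hφ0 (z 0)) hz
  have hdI : DifferentiableAt ℝ (Igau fb) (Prolong ξ φ z) := diff_Igau fb hfb _ hP1
  have hcomp : pullback (Prolong ξ φ) (fun w => fderiv ℝ (Igau fb) w) z
      = fderiv ℝ (Igau fb ∘ Prolong ξ φ) z := (fderiv_comp z hdI hdΦ).symm
  rw [hcomp]
  apply Filter.EventuallyEq.fderiv_eq
  have hopen : IsOpen {w : J | w 1 ≠ 0} := by
    have : Continuous fun w : J => w 1 := continuous_apply 1
    exact IsOpen.preimage this isOpen_compl_singleton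
  have hmem : {w : J | w 1 ≠ 0} ∈ nhds z := hopen.mem_nhds hz
  filter_upwards [hmem] with w hw
  exact key_Igau hξ hφ hξ' hφ0 heq w hw

end GE

open GE

/-- Proposition 1, gauge equivalence: if `D̄ = φ ∘ D ∘ (1/φ)` under
`x̄ = ξ(x), ū = φ(x)u`, then the prolongation `Φ` relates the two coframes by the
triangular structure group, and `Φ*ω̄⁶ = ω⁶` for `I = (f₄s + f₃r + f₂q + f₁p)/u + f₀`. -/
theorem gauge_equivalence_coframes (ξ φ : ℝ → ℝ) (f fb : Fin 5 → ℝ → ℝ)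
    (hξ : ContDiff ℝ (⊤ : ℕ∞) ξ) (hφ : ContDiff ℝ (⊤ : ℕ∞) φ)
    (hξ' : ∀ x, deriv ξ x ≠ 0) (hφ0 : ∀ x, φ x ≠ 0)
    (hf : ∀ i, ContDiff ℝ (⊤ : ℕ∞) (f i)) (hfb : ∀ i, ContDiff ℝ (⊤ : ℕ∞) (fb i))
    -- gauge equivalence: `D̄[ū](ξ(x)) = φ(x)·D[u](x)` whenever `ū(ξ(x)) = φ(x)u(x)`
    (heq : ∀ u v : ℝ → ℝ, ContDiff ℝ (⊤ : ℕ∞) u → ContDiff ℝ (⊤ : ℕ∞) v →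
      (∀ x, v (ξ x) = φ x * u x) →
      ∀ x, ∑ i : Fin 5, fb i (ξ x) * iteratedDeriv i.1 v (ξ x)
         = φ x * ∑ i : Fin 5, f i x * iteratedDeriv i.1 u x) :
    ∃ a : Fin 10 → (J → ℝ),
      (∀ i, ContDiff ℝ (⊤ : ℕ∞) (a i)) ∧
      (∀ z : J, z 1 ≠ 0 →
        pullback (Prolong ξ φ) ω1 z = a 0 z • ω1 z ∧
        pullback (Prolong ξ φ) ω2 z = ω2 z ∧
        pullback (Prolong ξ φ) ω3 z = a 1 z • ω2 z + a 2 z • ω3 z ∧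
        pullback (Prolong ξ φ) ω4 z = a 3 z • ω2 z + a 4 z • ω3 z + a 5 z • ω4 z ∧
        pullback (Prolong ξ φ) ω5 z
          = a 6 z • ω2 z + a 7 z • ω3 z + a 8 z • ω4 z + a 9 z • ω5 z ∧
        pullback (Prolong ξ φ) (fun w => fderiv ℝ (Igau fb) w) z = fderiv ℝ (Igau f) z) ∧
      (∀ z : J, a 0 z * a 2 z * a 5 z * a 9 z ≠ 0) ∧
      (∀ z : J, a 0 z = deriv ξ (z 0) ∧ a 2 z = φ (z 0) / deriv ξ (z 0) ∧
        a 5 z = φ (z 0) / (deriv ξ (z 0)) ^ 2 ∧ a 9 z = φ (z 0) / (deriv ξ (z 0)) ^ 3) := by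
  have hp := contDiff_cp hξ hφ hξ'
  have hq := contDiff_cq hξ hφ hξ'
  have hr := contDiff_cr hξ hφ hξ'
  have hproj0 : ContDiff ℝ (⊤:ℕ∞) (fun z : J => z 0) :=
    (ContinuousLinearMap.proj 0 : J →L[ℝ] ℝ).contDiff
  have hproj1 : ContDiff ℝ (⊤:ℕ∞) (fun z : J => z 1) :=
    (ContinuousLinearMap.proj 1 : J →L[ℝ] ℝ).contDiff
  refine ⟨![fun z => deriv ξ (z 0),
      fun z => z 1 * cp ξ φ 0 (z 0), fun z => cp ξ φ 1 (z 0),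
      fun z => z 1 * cq ξ φ 0 (z 0), fun z => cq ξ φ 1 (z 0), fun z => cq ξ φ 2 (z 0),
      fun z => z 1 * cr ξ φ 0 (z 0), fun z => cr ξ φ 1 (z 0), fun z => cr ξ φ 2 (z 0),
      fun z => cr ξ φ 3 (z 0)], ?_, ?_, ?_, ?_⟩
  · intro i
    fin_cases i
    · exact (contDiff_deriv hξ).comp hproj0
    · exact hproj1.mul ((hp 0).comp hproj0)
    · exact (hp 1).comp hproj0
    · exact hproj1.mul ((hq 0).comp hproj0)
    · exact (hq 1).comp hproj0
    · exact (hq 2).comp hproj0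
    · exact hproj1.mul ((hr 0).comp hproj0)
    · exact (hr 1).comp hproj0
    · exact (hr 2).comp hproj0
    · exact (hr 3).comp hproj0
  · intro z hz
    exact ⟨pull_ω1 hξ hφ hξ' z, pull_ω2 hξ hφ hξ' hφ0 z hz, pull_ω3 hξ hφ hξ' z hz,
      pull_ω4 hξ hφ hξ' z hz, pull_ω5 hξ hφ hξ' z hz,
      pull_ω6 hξ hφ hξ' hφ0 hfb heq z hz⟩
  · intro z
    show deriv ξ (z 0) * cp ξ φ 1 (z 0) * cq ξ φ 2 (z 0) * cr ξ φ 3 (z 0) ≠ 0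
    rw [cp1, cq2, cr3]
    exact mul_ne_zero (mul_ne_zero (mul_ne_zero (hξ' _)
      (div_ne_zero (hφ0 _) (hξ' _))) (div_ne_zero (hφ0 _) (pow_ne_zero _ (hξ' _))))
      (div_ne_zero (hφ0 _) (pow_ne_zero _ (hξ' _)))
  · intro z
    refine ⟨rfl, ?_, ?_, ?_⟩
    · show cp ξ φ 1 (z 0) = _; rw [cp1]
    · show cq ξ φ 2 (z 0) = _; rw [cq2]
    · show cr ξ φ 3 (z 0) = _; rw [cr3]
end
end
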